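/- arXiv:1711.06585 — 4 statements merged into one kernel-verified Lean document; each statement's English description precedes it below -/
import Mathlib

section
/- Let F = ℤ/dℤ. Given two injective F-module homomorphisms φ : E → L and ψ : E → L from a finite F-module E into a finite free F-module L, there exists an automorphism ε of L with ψ = ε ∘ φ. -/
open Function

namespace S4

noncomputable section

/-- The embedding of `ZMod n` into `ℚ/ℤ`, sending `1` to `1/n`. -/
def em (n : ℕ) [NeZero n] : ZMod n →+ AddCircle (1 : ℚ) :=
  ZMod.lift n ⟨(zmultiplesHom _) (((n : ℚ)⁻¹ : ℚ) : AddCircle (1 : ℚ)), by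
    have hn : (n : ℚ) ≠ 0 := by exact_mod_cast (NeZero.ne n)
    simp only [zmultiplesHom_apply]
    rw [← AddCircle.coe_zsmul]
    have : ((n : ℤ) • ((n : ℚ)⁻¹) : ℚ) = 1 := by
      rw [zsmul_eq_mul, Int.cast_natCast, mul_inv_cancel₀ hn]
    rw [this, AddCircle.coe_period]⟩

lemma em_intCast (n : ℕ) [NeZero n] (k : ℤ) :
    em n (k : ZMod n) = ((k • ((n : ℚ)⁻¹) : ℚ) : AddCircle (1 : ℚ)) := by
  rw [em, ZMod.lift_coe]
  simp [zmultiplesHom_apply, AddCircle.coe_zsmul]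

lemma em_eq_zero_iff (n : ℕ) [NeZero n] (c : ZMod n) : em n c = 0 ↔ c = 0 := by
  have hn : (n : ℚ) ≠ 0 := by exact_mod_cast (NeZero.ne n)
  constructor
  · intro h
    have hc : c = ((c.val : ℤ) : ZMod n) := by
      rw [Int.cast_natCast, ZMod.natCast_val, ZMod.cast_id]
    rw [hc, em_intCast, AddCircle.coe_eq_zero_iff] at h
    obtain ⟨z, hz⟩ := h
    simp only [zsmul_eq_mul, mul_one] at hz
    rw [eq_comm, inv_eq_one_div, mul_one_div, div_eq_iff hn] at hz
    have hq : (c.val : ℚ) = z * n := by exact_mod_cast hz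
    have hz' : (c.val : ℤ) = z * n := by exact_mod_cast hq
    have : (n : ℕ) ∣ c.val := by
      have : (n : ℤ) ∣ (c.val : ℤ) := ⟨z, by rw [hz']; ring⟩
      exact_mod_cast this
    rw [hc, Int.cast_natCast, (ZMod.natCast_eq_zero_iff _ _).mpr this]
  · rintro rfl; simp

lemma em_injective (n : ℕ) [NeZero n] : Function.Injective (em n) := by
  intro a b hab
  have h : em n (a - b) = 0 := by rw [map_sub, hab, sub_self]
  have := (em_eq_zero_iff n _).mp h
  exact sub_eq_zero.mp this

lemma mem_range_em (n : ℕ) [NeZero n] (y : AddCircle (1 : ℚ)) (hy : n • y = 0) :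
    ∃ c : ZMod n, em n c = y := by
  have hn : (n : ℚ) ≠ 0 := by exact_mod_cast (NeZero.ne n)
  induction y using QuotientAddGroup.induction_on with
  | H q =>
  rw [← AddCircle.coe_nsmul, AddCircle.coe_eq_zero_iff] at hy
  obtain ⟨z, hz⟩ := hy
  have hq : (n : ℚ) * q = z := by
    simpa [zsmul_eq_mul, nsmul_eq_mul] using hz.symm
  refine ⟨(z : ZMod n), ?_⟩
  rw [em_intCast]
  congr 1
  rw [zsmul_eq_mul]
  field_simp
  linarith [hq]

/-- `ZMod n` is injective for `n`-torsion abelian groups: any homomorphism into `ZMod n`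
extends along an injection between `n`-torsion groups. -/
lemma ext_hom (n : ℕ) [NeZero n] {M N : Type} [AddCommGroup M] [AddCommGroup N]
    (hN : ∀ y : N, n • y = 0) (f : M →+ N) (hf : Function.Injective f)
    (g : M →+ ZMod n) : ∃ h : N →+ ZMod n, ∀ x, h (f x) = g x := by
  obtain ⟨c, hc⟩ := CharacterModule.dual_surjective_of_injective (R := ℤ)
    f.toIntLinearMap hf (((em n).comp g : M →+ AddCircle (1 : ℚ)) : CharacterModule M)
  -- `c : CharacterModule N` with `c ∘ f = em n ∘ g`
  have hc' : ∀ x : M, c (f x) = em n (g x) := by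
    intro x
    exact congrFun (congrArg (fun (t : CharacterModule M) => (t : M → AddCircle (1:ℚ))) hc) x
  have hrange : ∀ y : N, ∃ cc : ZMod n, em n cc = c y := by
    intro y
    refine mem_range_em n (c y) ?_
    have : c (n • y) = 0 := by rw [hN y, map_zero]
    rw [map_nsmul] at this
    exact this
  choose inv hinv using hrange
  have hadd : ∀ y z : N, inv (y + z) = inv y + inv z := by
    intro y z
    apply em_injective n
    rw [map_add, hinv, hinv, hinv, map_add]
  refine ⟨AddMonoidHom.mk' inv hadd, ?_⟩
  intro x
  apply em_injective n
  rw [AddMonoidHom.mk'_apply, hinv, hc']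

/-- Chinese remainder: prescribe residues modulo finitely many distinct primes. -/
lemma crt (s : Finset ℕ) (hs : ∀ p ∈ s, p.Prime) :
    ∀ a : (p : ℕ) → p ∈ s → ZMod p, ∃ z : ℤ, ∀ p (hp : p ∈ s), (z : ZMod p) = a p hp := by
  classical
  induction s using Finset.induction_on with
  | empty => exact fun a => ⟨0, fun p hp => absurd hp (Finset.notMem_empty p)⟩
  | @insert p s hps ih =>
    intro a
    have hp : p.Prime := hs p (Finset.mem_insert_self p s)
    haveI : NeZero p := ⟨hp.pos.ne'⟩
    haveI : Fact p.Prime := ⟨hp⟩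
    obtain ⟨z', hz'⟩ := ih (fun q hq => hs q (Finset.mem_insert_of_mem hq))
      (fun q hq => a q (Finset.mem_insert_of_mem hq))
    set M : ℕ := ∏ q ∈ s, q with hM
    have hcop : ¬ (p ∣ M) := by
      intro hdvd
      obtain ⟨q, hq, hpq⟩ := hp.prime.exists_mem_finset_dvd hdvd
      have hq' : q.Prime := hs q (Finset.mem_insert_of_mem hq)
      have : p = q := ((Nat.prime_dvd_prime_iff_eq hp hq').mp hpq)
      exact hps (this ▸ hq)
    have hMunit : IsUnit (M : ZMod p) := by
      rw [ZMod.isUnit_iff_coprime]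
      exact Nat.coprime_comm.mp ((Nat.Prime.coprime_iff_not_dvd hp).mpr hcop)
    obtain ⟨u, hu⟩ := hMunit
    set t : ZMod p := ↑u⁻¹ * (a p (Finset.mem_insert_self p s) - (z' : ZMod p)) with ht
    refine ⟨z' + M * (t.val : ℤ), ?_⟩
    intro q hq
    rcases Finset.mem_insert.mp hq with rfl | hq'
    · have h1 : ((t.val : ℕ) : ZMod q) = t := by
        rw [ZMod.natCast_val, ZMod.cast_id]
      push_cast
      rw [h1, ← hu, ht, u.mul_inv_cancel_left]
      ring
    · have hqprime := hs q (Finset.mem_insert_of_mem hq')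
      haveI : NeZero q := ⟨hqprime.pos.ne'⟩
      have hM0 : (M : ZMod q) = 0 :=
        (ZMod.natCast_eq_zero_iff _ _).mpr (Finset.dvd_prod_of_mem _ hq')
      push_cast
      rw [hM0, zero_mul, add_zero, hz' q hq']
/-- If `m • y = 0` in `ZMod d` with `m ∣ d` then `y` is a multiple of `d/m`. -/
lemma exists_mul_of_nsmul_eq_zero {d m : ℕ} [NeZero d] (hm : m ∣ d) (hm0 : 0 < m)
    {y : ZMod d} (hy : m • y = 0) : ∃ c : ℕ, y = ((d / m : ℕ) : ZMod d) * (c : ZMod d) := by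
  have hyv : (↑(m * y.val) : ZMod d) = 0 := by
    push_cast
    rw [ZMod.natCast_val, ZMod.cast_id, ← nsmul_eq_mul]
    exact hy
  have hdvd : d ∣ m * y.val := (ZMod.natCast_eq_zero_iff _ _).mp hyv
  obtain ⟨d', rfl⟩ := hm
  have hd' : d' ∣ y.val := (mul_dvd_mul_iff_left hm0.ne').mp hdvd
  obtain ⟨c, hc⟩ := hd'
  refine ⟨c, ?_⟩
  have hyy : y = ((y.val : ℕ) : ZMod (m * d')) := by
    rw [ZMod.natCast_val, ZMod.cast_id]
  rw [hyy, hc, Nat.mul_div_cancel_left _ hm0]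
  push_cast
  ring

/-- The embedding `ZMod m →+ ZMod d` sending `1` to `d/m`, for `m ∣ d`. -/
def iota (d m : ℕ) [NeZero m] (hm : m ∣ d) : ZMod m →+ ZMod d :=
  ZMod.lift m ⟨(AddMonoidHom.mulLeft ((d / m : ℕ) : ZMod d)).comp (Int.castAddHom (ZMod d)), by
    show ((d / m : ℕ) : ZMod d) * ((m : ℤ) : ZMod d) = 0
    push_cast
    rw [← Nat.cast_mul, Nat.div_mul_cancel hm, ZMod.natCast_self]⟩

lemma iota_natCast {d m : ℕ} [NeZero m] (hm : m ∣ d) (c : ℕ) :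
    iota d m hm (c : ZMod m) = ((d / m : ℕ) : ZMod d) * (c : ZMod d) := by
  have : ((c : ℕ) : ZMod m) = ((c : ℤ) : ZMod m) := by push_cast; rfl
  rw [this, iota, ZMod.lift_coe]
  simp

lemma iota_val {d m : ℕ} [NeZero m] (hm : m ∣ d) (c : ZMod m) :
    iota d m hm c = ((d / m : ℕ) : ZMod d) * ((c.val : ℕ) : ZMod d) := by
  conv_lhs => rw [show c = ((c.val : ℕ) : ZMod m) by rw [ZMod.natCast_val, ZMod.cast_id]]
  exact iota_natCast hm c.val

lemma iota_injective {d m : ℕ} [NeZero d] [NeZero m] (hm : m ∣ d) :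
    Function.Injective (iota d m hm) := by
  intro a b hab
  have h : iota d m hm (a - b) = 0 := by rw [map_sub, hab, sub_self]
  set c := a - b with hc
  have hcv : c = ((c.val : ℕ) : ZMod m) := by rw [ZMod.natCast_val, ZMod.cast_id]
  rw [hcv, iota_natCast, ← Nat.cast_mul] at h
  have hdvd : d ∣ (d / m) * c.val := (ZMod.natCast_eq_zero_iff _ _).mp h
  have hd : d = (d / m) * m := (Nat.div_mul_cancel hm).symm
  have hdm0 : 0 < d / m := Nat.div_pos (Nat.le_of_dvd (Nat.pos_of_ne_zero (NeZero.ne d)) hm)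
    (Nat.pos_of_ne_zero (NeZero.ne m))
  nth_rewrite 1 [hd] at hdvd
  have hmc : m ∣ c.val := (mul_dvd_mul_iff_left hdm0.ne').mp hdvd
  have : c = 0 := by rw [hcv, (ZMod.natCast_eq_zero_iff _ _).mpr hmc]
  exact sub_eq_zero.mp (hc ▸ this)

lemma mem_range_iota {d m : ℕ} [NeZero d] [NeZero m] (hm : m ∣ d) (hm0 : 0 < m)
    {y : ZMod d} (hy : m • y = 0) : ∃ c : ZMod m, iota d m hm c = y := by
  obtain ⟨c, hc⟩ := exists_mul_of_nsmul_eq_zero hm hm0 hy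
  exact ⟨(c : ZMod m), by rw [iota_natCast, ← hc]⟩

/-- An element of `ZMod d` that is nonzero modulo every prime divisor of `d` is a unit. -/
lemma isUnit_of_forall_prime {d : ℕ} [NeZero d] (x : ZMod d)
    (h : ∀ p (hp : p.Prime) (hpd : p ∣ d), ZMod.castHom hpd (ZMod p) x ≠ 0) : IsUnit x := by
  have hx : x = ((x.val : ℕ) : ZMod d) := by rw [ZMod.natCast_val, ZMod.cast_id]
  rw [hx, ZMod.isUnit_iff_coprime]
  by_contra hcop
  obtain ⟨p, hp, hpg⟩ := Nat.exists_prime_and_dvd (hcop : Nat.gcd x.val d ≠ 1)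
  have hpd : p ∣ d := hpg.trans (Nat.gcd_dvd_right _ _)
  have hpx : p ∣ x.val := hpg.trans (Nat.gcd_dvd_left _ _)
  refine h p hp hpd ?_
  rw [ZMod.castHom_apply, hx, ZMod.cast_natCast hpd,
    (ZMod.natCast_eq_zero_iff _ _).mpr hpx]

section Shears

variable {R : Type} [CommRing R] {r : ℕ}

/-- Shear adding a combination of the later coordinates to coordinate `0`. -/
def shear0 (k : Fin r → R) : (Fin (r + 1) → R) ≃ₗ[R] (Fin (r + 1) → R) where
  toFun y := Fin.cons (y 0 + ∑ j, k j * y j.succ) (fun j => y j.succ)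
  invFun y := Fin.cons (y 0 - ∑ j, k j * y j.succ) (fun j => y j.succ)
  left_inv y := by
    funext i
    refine Fin.cases ?_ (fun j => ?_) i <;> simp
  right_inv y := by
    funext i
    refine Fin.cases ?_ (fun j => ?_) i <;> simp
  map_add' y z := by
    funext i
    refine Fin.cases ?_ (fun j => ?_) i
    · simp [mul_add, Finset.sum_add_distrib]; ring
    · simp
  map_smul' c y := by
    funext i
    refine Fin.cases ?_ (fun j => ?_) i
    · simp [smul_eq_mul, mul_add, Finset.mul_sum, mul_left_comm]
    · simp

/-- Scaling coordinate `0` by a unit. -/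
def scale0 (u : Rˣ) : (Fin (r + 1) → R) ≃ₗ[R] (Fin (r + 1) → R) where
  toFun y := Fin.cons ((u : R) * y 0) (fun j => y j.succ)
  invFun y := Fin.cons ((u⁻¹ : Rˣ) * y 0) (fun j => y j.succ)
  left_inv y := by
    funext i
    refine Fin.cases ?_ (fun j => ?_) i <;> simp
  right_inv y := by
    funext i
    refine Fin.cases ?_ (fun j => ?_) i <;> simp
  map_add' y z := by
    funext i
    refine Fin.cases ?_ (fun j => ?_) i
    · simp [mul_add]
    · simp
  map_smul' c y := by
    funext i
    refine Fin.cases ?_ (fun j => ?_) i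
    · simp [smul_eq_mul]; ring
    · simp

/-- Shear adding multiples of coordinate `0` to the later coordinates. -/
def shearTail (c : Fin r → R) : (Fin (r + 1) → R) ≃ₗ[R] (Fin (r + 1) → R) where
  toFun y := Fin.cons (y 0) (fun j => y j.succ + c j * y 0)
  invFun y := Fin.cons (y 0) (fun j => y j.succ - c j * y 0)
  left_inv y := by
    funext i
    refine Fin.cases ?_ (fun j => ?_) i <;> simp
  right_inv y := by
    funext i
    refine Fin.cases ?_ (fun j => ?_) i <;> simp
  map_add' y z := by
    funext i
    refine Fin.cases ?_ (fun j => ?_) i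
    · simp
    · simp [mul_add]; ring
  map_smul' a y := by
    funext i
    refine Fin.cases ?_ (fun j => ?_) i
    · simp
    · simp [smul_eq_mul]; ring

end Shears

/-- **Pivot lemma**: an element of order `m` in `(ZMod d)^(r'+1)` can be moved to
`(d/m, 0, …, 0)` by a linear automorphism. -/
lemma pivot (d : ℕ) [NeZero d] {r' : ℕ} (m : ℕ) (hm : m ∣ d) (hm2 : 2 ≤ m)
    (v : Fin (r' + 1) → ZMod d) (hord : addOrderOf v = m) :
    ∃ Φ : (Fin (r' + 1) → ZMod d) ≃ₗ[ZMod d] (Fin (r' + 1) → ZMod d),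
      Φ v = Fin.cons ((d / m : ℕ) : ZMod d) (fun _ => (0 : ZMod d)) := by
  classical
  have hm0 : 0 < m := by omega
  have hmv : m • v = 0 := by rw [← hord]; exact addOrderOf_nsmul_eq_zero v
  have hco : ∀ i, ∃ c : ℕ, v i = ((d / m : ℕ) : ZMod d) * (c : ZMod d) := by
    intro i
    refine exists_mul_of_nsmul_eq_zero hm hm0 ?_
    have := congrFun hmv i
    simpa using this
  choose w0 hw0 using hco
  -- per-prime choice of adjustment residues
  have key : ∀ p (hp : p.Prime) (hpd : p ∣ d), ∃ κ ζ : Fin (r' + 1) → ZMod p,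
      ((w0 0 : ZMod p) + (m : ZMod p) * ζ 0) +
        ∑ j : Fin r', κ j.succ * ((w0 j.succ : ZMod p) + (m : ZMod p) * ζ j.succ) ≠ 0 := by
    intro p hp hpd
    haveI : Fact p.Prime := ⟨hp⟩
    by_cases hpm : p ∣ m
    · -- some coordinate of w0 is nonzero mod p
      have hmp0 : (m : ZMod p) = 0 := (ZMod.natCast_eq_zero_iff _ _).mpr hpm
      have hex : ∃ i, (w0 i : ZMod p) ≠ 0 := by
        by_contra hall
        push_neg at hall
        have hdc : ∀ i, ∃ c : ℕ, w0 i = p * c := by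
          intro i
          exact (ZMod.natCast_eq_zero_iff _ _).mp (hall i)
        choose cc hcc using hdc
        obtain ⟨m₁, hm₁⟩ := hpm
        obtain ⟨d₁, hd₁⟩ := hm
        have hm₁pos : 0 < m₁ := by
          rcases Nat.eq_zero_or_pos m₁ with h0 | h
          · subst h0; simp at hm₁; omega
          · exact h
        have hmp : m / p = m₁ := by rw [hm₁, Nat.mul_div_cancel_left _ hp.pos]
        have harith : (m / p) * (d / m) * p = d := by
          rw [hmp, hd₁, hm₁, Nat.mul_div_cancel_left _ (Nat.mul_pos hp.pos hm₁pos)]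
          ring
        have hv : (m / p) • v = 0 := by
          funext i
          have : v i = ((d / m : ℕ) : ZMod d) * ((p : ZMod d) * (cc i : ZMod d)) := by
            rw [hw0 i, hcc i]; push_cast; ring
          rw [Pi.smul_apply, Pi.zero_apply, this, nsmul_eq_mul]
          push_cast
          have : ((m / p : ℕ) : ZMod d) * (((d / m : ℕ) : ZMod d) * ((p : ZMod d) *
              (cc i : ZMod d))) = ((((m / p) * (d / m) * p : ℕ)) : ZMod d) * (cc i : ZMod d) := by
            push_cast; ring
          rw [this, harith, ZMod.natCast_self, zero_mul]
        have hdvd : m ∣ m / p := by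
          have h2 := addOrderOf_dvd_iff_nsmul_eq_zero.mpr hv
          rwa [hord] at h2
        have hlt : m / p < m := Nat.div_lt_self hm0 hp.one_lt
        have hpos : 0 < m / p := hmp ▸ hm₁pos
        exact absurd (Nat.le_of_dvd hpos hdvd) (by omega)
      obtain ⟨i, hi⟩ := hex
      by_cases h0 : (w0 0 : ZMod p) ≠ 0
      · refine ⟨fun _ => 0, fun _ => 0, ?_⟩
        simpa [hmp0] using h0
      · push_neg at h0
        have hine : i ≠ 0 := by rintro rfl; exact hi h0
        obtain ⟨j₀, rfl⟩ := Fin.exists_succ_eq_of_ne_zero hine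
        refine ⟨fun t => if t = j₀.succ then (1 - (w0 0 : ZMod p)) * (w0 j₀.succ : ZMod p)⁻¹
          else 0, fun _ => 0, ?_⟩
        have hsum : ∑ j : Fin r', (if j.succ = j₀.succ then
            (1 - (w0 0 : ZMod p)) * (w0 j₀.succ : ZMod p)⁻¹ else 0) *
            ((w0 j.succ : ZMod p) + (m : ZMod p) * 0) = 1 - (w0 0 : ZMod p) := by
          rw [Finset.sum_eq_single j₀]
          · rw [if_pos rfl, mul_zero, add_zero, mul_assoc, inv_mul_cancel₀ hi, mul_one]
          · intro b _ hb
            rw [if_neg (fun hc => hb (Fin.succ_injective _ hc)), zero_mul]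
          · intro hb; exact absurd (Finset.mem_univ j₀) hb
        simp only [Pi.zero_apply, mul_zero, add_zero] at hsum ⊢
        rw [hsum]
        simp
    · -- m is invertible mod p
      have hmu : (m : ZMod p) ≠ 0 := by
        rw [Ne, ZMod.natCast_eq_zero_iff]
        exact hpm
      refine ⟨fun _ => 0, fun t => if t = 0 then (1 - (w0 0 : ZMod p)) * (m : ZMod p)⁻¹ else 0, ?_⟩
      simp only [if_pos rfl, Pi.zero_apply, zero_mul, Finset.sum_const_zero, add_zero, if_true]
      rw [mul_comm ((m : ZMod p)) _, mul_assoc, inv_mul_cancel₀ hmu, mul_one]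
      intro hc
      rw [add_sub_cancel] at hc
      exact one_ne_zero hc
  choose κf ζf hkey using key
  -- combine via CRT
  have hcrt : ∀ t : Fin (r' + 1), ∃ kz : ℤ × ℤ,
      ∀ p (hp : p.Prime) (hpd : p ∣ d),
        ((kz.1 : ZMod p) = κf p hp hpd t ∧ (kz.2 : ZMod p) = ζf p hp hpd t) := by
    intro t
    have hd0 : d ≠ 0 := NeZero.ne d
    obtain ⟨z₁, hz₁⟩ := crt d.primeFactors (fun q hq => Nat.prime_of_mem_primeFactors hq)
      (fun q hq => κf q (Nat.prime_of_mem_primeFactors hq) (Nat.dvd_of_mem_primeFactors hq) t)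
    obtain ⟨z₂, hz₂⟩ := crt d.primeFactors (fun q hq => Nat.prime_of_mem_primeFactors hq)
      (fun q hq => ζf q (Nat.prime_of_mem_primeFactors hq) (Nat.dvd_of_mem_primeFactors hq) t)
    refine ⟨(z₁, z₂), fun p hp hpd => ?_⟩
    have hmem : p ∈ d.primeFactors := Nat.mem_primeFactors.mpr ⟨hp, hpd, hd0⟩
    exact ⟨hz₁ p hmem, hz₂ p hmem⟩
  choose kz hkz using hcrt
  set kk : Fin (r' + 1) → ZMod d := fun t => (((kz t).1 : ℤ) : ZMod d) with hkk
  set zz : Fin (r' + 1) → ZMod d := fun t => (((kz t).2 : ℤ) : ZMod d) with hzz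
  set w' : Fin (r' + 1) → ZMod d := fun i => (w0 i : ZMod d) + (m : ZMod d) * zz i with hw'
  -- v = (d/m) • w'
  have hvw' : v = ((d / m : ℕ) : ZMod d) • w' := by
    funext i
    have h0 : ((d / m : ℕ) : ZMod d) * ((m : ℕ) : ZMod d) = 0 := by
      rw [← Nat.cast_mul, Nat.div_mul_cancel hm, ZMod.natCast_self]
    simp only [Pi.smul_apply, smul_eq_mul, hw', hw0 i]
    rw [mul_add, ← mul_assoc, h0, zero_mul, add_zero]
  set u : ZMod d := w' 0 + ∑ j : Fin r', kk j.succ * w' j.succ with hu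
  have hunit : IsUnit u := by
    apply isUnit_of_forall_prime
    intro p hp hpd
    have hw'cast : ∀ i, (ZMod.castHom hpd (ZMod p)) (w' i)
        = (w0 i : ZMod p) + (m : ZMod p) * ζf p hp hpd i := by
      intro i
      simp only [hw', hzz, map_add, map_mul, map_natCast, map_intCast, (hkz i p hp hpd).2]
    have hkkcast : ∀ t, (ZMod.castHom hpd (ZMod p)) (kk t) = κf p hp hpd t := by
      intro t
      simp only [hkk, map_intCast, (hkz t p hp hpd).1]
    have hcast : (ZMod.castHom hpd (ZMod p)) u
        = ((w0 0 : ZMod p) + (m : ZMod p) * ζf p hp hpd 0) +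
          ∑ j : Fin r', κf p hp hpd j.succ *
            ((w0 j.succ : ZMod p) + (m : ZMod p) * ζf p hp hpd j.succ) := by
      rw [hu, map_add, map_sum]
      simp only [map_mul, hw'cast, hkkcast]
    rw [hcast]
    exact hkey p hp hpd
  obtain ⟨uu, huu⟩ := hunit
  have hinv : (↑uu⁻¹ : ZMod d) * u = 1 := by rw [← huu]; exact uu.inv_mul
  refine ⟨(shear0 (fun j => kk j.succ)).trans
    ((scale0 uu⁻¹).trans (shearTail (fun j => - w' j.succ))), ?_⟩
  have hΦ : ((shear0 (fun j => kk j.succ)).trans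
      ((scale0 uu⁻¹).trans (shearTail (fun j => - w' j.succ)))) w'
      = Fin.cons 1 (fun _ => (0 : ZMod d)) := by
    funext i
    refine Fin.cases ?_ (fun j => ?_) i
    · simp only [LinearEquiv.trans_apply, shear0, scale0, shearTail, LinearEquiv.coe_mk,
        LinearMap.coe_mk, AddHom.coe_mk, Fin.cons_zero, Fin.cons_succ, ← hu, hinv]
    · simp only [LinearEquiv.trans_apply, shear0, scale0, shearTail, LinearEquiv.coe_mk,
        LinearMap.coe_mk, AddHom.coe_mk, Fin.cons_zero, Fin.cons_succ, ← hu, hinv]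
      ring
  rw [hvw', map_smul, hΦ]
  funext i
  refine Fin.cases ?_ (fun j => ?_) i
  · simp
  · simp
set_option maxHeartbeats 2000000 in
/-- Main lemma: the statement for the concrete free module `Fin r → ZMod d`. -/
lemma key (d : ℕ) (hd : 2 ≤ d) (n : ℕ) :
    ∀ (E : Type) [AddCommGroup E] [Module (ZMod d) E] [Finite E] (r : ℕ)
      (φ ψ : E →ₗ[ZMod d] (Fin r → ZMod d)),
      Nat.card E ≤ n → Function.Injective φ → Function.Injective ψ →
      ∃ ε : (Fin r → ZMod d) ≃ₗ[ZMod d] (Fin r → ZMod d), ∀ x, ψ x = ε (φ x) := by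
  haveI : NeZero d := ⟨by omega⟩
  induction n with
  | zero =>
    intro E _ _ _ r φ ψ hcard _ _
    have := Nat.card_pos (α := E)
    omega
  | succ n ih =>
    intro E _ _ _ r φ ψ hcard hφ hψ
    rcases subsingleton_or_nontrivial E with hE | hE
    · refine ⟨LinearEquiv.refl _ _, fun x => ?_⟩
      have hx : x = 0 := Subsingleton.elim x 0
      rw [hx, map_zero, map_zero, LinearEquiv.refl_apply]
    -- setup
    have hEtors : ∀ e : E, d • e = 0 := fun e => by
      rw [← Nat.cast_smul_eq_nsmul (ZMod d), ZMod.natCast_self, zero_smul]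
    set m : ℕ := AddMonoid.exponent E with hmdef
    have hm : m ∣ d := AddMonoid.exponent_dvd_of_forall_nsmul_eq_zero hEtors
    have hm2 : 2 ≤ m := AddMonoid.one_lt_exponent
    haveI : NeZero m := ⟨by omega⟩
    have hEE : AddMonoid.ExponentExists E := AddMonoid.exponent_ne_zero.mp (by omega)
    obtain ⟨x, hx⟩ := AddMonoid.exists_addOrderOf_eq_exponent hEE
    rw [← hmdef] at hx
    have hEm : ∀ e : E, m • e = 0 := fun e => AddMonoid.exponent_nsmul_eq_zero e
    -- r must be positive
    cases r with
    | zero =>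
      exfalso
      have hx0 : x ≠ 0 := by
        intro h0
        rw [h0, addOrderOf_zero] at hx
        omega
      exact hx0 (hφ (Subsingleton.elim (φ x) (φ 0)))
    | succ r' =>
    have hvφ : addOrderOf (φ x) = m := by
      have := addOrderOf_injective φ.toAddMonoidHom hφ x
      simp only [LinearMap.toAddMonoidHom_coe] at this
      rw [this, hx]
    have hvψ : addOrderOf (ψ x) = m := by
      have := addOrderOf_injective ψ.toAddMonoidHom hψ x
      simp only [LinearMap.toAddMonoidHom_coe] at this
      rw [this, hx]
    obtain ⟨Φφ, hΦφ⟩ := pivot d m hm hm2 (φ x) hvφ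
    obtain ⟨Φψ, hΦψ⟩ := pivot d m hm hm2 (ψ x) hvψ
    set φh : E →ₗ[ZMod d] (Fin (r' + 1) → ZMod d) := Φφ.toLinearMap.comp φ with hφh
    set ψh : E →ₗ[ZMod d] (Fin (r' + 1) → ZMod d) := Φψ.toLinearMap.comp ψ with hψh
    have hφhinj : Function.Injective φh := Φφ.injective.comp hφ
    have hψhinj : Function.Injective ψh := Φψ.injective.comp hψ
    have hφhx : φh x = Fin.cons ((d / m : ℕ) : ZMod d) (fun _ => (0 : ZMod d)) := hΦφ
    have hψhx : ψh x = Fin.cons ((d / m : ℕ) : ZMod d) (fun _ => (0 : ZMod d)) := hΦψ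
    -- the retraction ρ : E →+ ZMod m
    have hxm : ((m : ℤ)) • x = 0 := by
      rw [natCast_zsmul, ← hx]; exact addOrderOf_nsmul_eq_zero x
    set χ : ZMod m →+ E := ZMod.lift m ⟨zmultiplesHom E x, hxm⟩ with hχ
    have hχcast : ∀ k : ℤ, χ ((k : ℤ) : ZMod m) = k • x := fun k => by
      rw [hχ, ZMod.lift_coe]; rfl
    have hχinj : Function.Injective χ := by
      intro a b hab
      have h0 : χ (a - b) = 0 := by rw [map_sub, hab, sub_self]
      have hval : a - b = (((a - b).val : ℤ) : ZMod m) := by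
        push_cast
        rw [ZMod.natCast_val, ZMod.cast_id]
      rw [hval, hχcast] at h0
      have : m ∣ (a - b).val := by
        have hdvd : addOrderOf x ∣ (a - b).val := by
          apply addOrderOf_dvd_iff_nsmul_eq_zero.mpr
          rw [← natCast_zsmul]
          exact h0
        rwa [hx] at hdvd
      have : a - b = 0 := by
        rw [hval, Int.cast_natCast, (ZMod.natCast_eq_zero_iff _ _).mpr this]
      exact sub_eq_zero.mp this
    obtain ⟨ρ, hρ⟩ := ext_hom m (fun e => hEm e) χ hχinj (AddMonoidHom.id (ZMod m))
    have hρx : ρ x = 1 := by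
      have h1 : χ (((1 : ℤ) : ZMod m)) = x := by rw [hχcast, one_zsmul]
      have := hρ ((1 : ℤ) : ZMod m)
      rw [h1] at this
      rw [this]
      simp
    -- the complement K = ker ρ
    set Ksub : Submodule (ZMod d) E := AddSubgroup.toZModSubmodule d ρ.ker with hKsub
    have hmemK : ∀ e : E, e ∈ Ksub ↔ ρ e = 0 := fun e => by
      rw [hKsub, AddSubgroup.mem_toZModSubmodule, AddMonoidHom.mem_ker]
    have hdecomp : ∀ e : E, e - (ρ e).val • x ∈ Ksub := by
      intro e
      rw [hmemK, map_sub, AddMonoidHom.map_nsmul, hρx, nsmul_eq_mul, mul_one,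
        ZMod.natCast_val, ZMod.cast_id, sub_self]
    -- cardinality bound
    have hcardK : Nat.card ↥Ksub ≤ n := by
      have hbij : Function.Bijective
          (fun kc : ↥Ksub × ZMod m => (kc.1 : E) + (kc.2).val • x) := by
        constructor
        · rintro ⟨k1, c1⟩ ⟨k2, c2⟩ heq
          simp only at heq
          have hρeq : ρ ((k1 : E) + c1.val • x) = ρ ((k2 : E) + c2.val • x) := by rw [heq]
          rw [map_add, map_add, AddMonoidHom.map_nsmul, AddMonoidHom.map_nsmul, hρx,
            (hmemK _).mp k1.2, (hmemK _).mp k2.2, zero_add, zero_add,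
            nsmul_eq_mul, mul_one, nsmul_eq_mul, mul_one,
            ZMod.natCast_val, ZMod.cast_id, ZMod.natCast_val, ZMod.cast_id] at hρeq
          subst hρeq
          have hkk : (k1 : E) = k2 := by
            have := add_right_cancel heq
            exact this
          exact Prod.ext (Subtype.ext hkk) rfl
        · intro e
          exact ⟨⟨⟨e - (ρ e).val • x, hdecomp e⟩, ρ e⟩, by simp⟩
      have hcardeq : Nat.card (↥Ksub × ZMod m) = Nat.card E := Nat.card_eq_of_bijective _ hbij
      rw [Nat.card_prod, Nat.card_zmod] at hcardeq
      have hKpos : 0 < Nat.card ↥Ksub := Nat.card_pos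
      nlinarith [hcardeq, hcard, hm2, hKpos]
    -- tail projection
    set π : (Fin (r' + 1) → ZMod d) →ₗ[ZMod d] (Fin r' → ZMod d) :=
      LinearMap.funLeft (ZMod d) (ZMod d) Fin.succ with hπ
    have hπapp : ∀ (y : Fin (r' + 1) → ZMod d) (j : Fin r'), π y j = y j.succ :=
      fun y j => rfl
    have hπcons : ∀ (a : ZMod d) (t : Fin r' → ZMod d), π (Fin.cons a t) = t := by
      intro a t; funext j; rw [hπapp]; simp [Fin.cons_succ]
    -- restricted maps
    set φ1 : ↥Ksub →ₗ[ZMod d] (Fin r' → ZMod d) := π.comp (φh.comp Ksub.subtype) with hφ1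
    set ψ1 : ↥Ksub →ₗ[ZMod d] (Fin r' → ZMod d) := π.comp (ψh.comp Ksub.subtype) with hψ1
    have hinj1 : ∀ (f : E →ₗ[ZMod d] (Fin (r' + 1) → ZMod d)), Function.Injective f →
        f x = Fin.cons ((d / m : ℕ) : ZMod d) (fun _ => (0 : ZMod d)) →
        Function.Injective (π.comp (f.comp Ksub.subtype)) := by
      intro f hfinj hfx
      have hker : ∀ k : ↥Ksub, π.comp (f.comp Ksub.subtype) k = 0 → k = 0 := by
        intro k hk
        have htor : m • (f (k : E) 0) = 0 := by
          have h1 : m • (k : E) = 0 := hEm _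
          have : f (m • (k : E)) 0 = 0 := by rw [h1, map_zero]; rfl
          rw [map_nsmul] at this
          exact this
        obtain ⟨c, hc⟩ := mem_range_iota hm (by omega) htor
        have hvec : f (k : E) = f (c.val • x) := by
          funext i
          refine Fin.cases ?_ (fun j => ?_) i
          · rw [map_nsmul, hfx]
            have h2 : (c.val • Fin.cons ((d / m : ℕ) : ZMod d) (fun _ => (0 : ZMod d))
                : Fin (r' + 1) → ZMod d) 0 = ((c.val : ℕ) : ZMod d) * ((d / m : ℕ) : ZMod d) := by
              simp [Fin.cons_zero, nsmul_eq_mul]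
            rw [h2, ← hc, iota_val, mul_comm]
          · have h3 : f (k : E) j.succ = π.comp (f.comp Ksub.subtype) k j := rfl
            rw [h3, hk, map_nsmul, hfx]
            simp [Fin.cons_succ]
        have hkx : (k : E) = c.val • x := hfinj hvec
        have hc0 : ρ (k : E) = 0 := (hmemK _).mp k.2
        rw [hkx, AddMonoidHom.map_nsmul, hρx, nsmul_eq_mul, mul_one,
          ZMod.natCast_val, ZMod.cast_id] at hc0
        have : (k : E) = 0 := by rw [hkx, hc0, ZMod.val_zero, zero_smul]
        exact Subtype.ext this
      intro a b hab
      have : a - b = 0 := hker _ (by rw [map_sub, hab, sub_self])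
      exact sub_eq_zero.mp this
    have hφ1inj : Function.Injective φ1 := hinj1 φh hφhinj hφhx
    have hψ1inj : Function.Injective ψ1 := hinj1 ψh hψhinj hψhx
    -- induction hypothesis
    obtain ⟨ε1, hε1⟩ := ih ↥Ksub r' φ1 ψ1 hcardK hφ1inj hψ1inj
    -- correction functional
    set δ : ↥Ksub →+ ZMod d := AddMonoidHom.mk'
      (fun k => ψh (k : E) 0 - φh (k : E) 0) (by
        intro a b
        simp only [Submodule.coe_add, map_add, Pi.add_apply]
        ring) with hδ
    have htorsN : ∀ y : Fin r' → ZMod d, d • y = 0 := by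
      intro y
      funext j
      rw [Pi.smul_apply, ← Nat.cast_smul_eq_nsmul (ZMod d), ZMod.natCast_self, zero_smul]
      rfl
    obtain ⟨F, hF⟩ := ext_hom d htorsN φ1.toAddMonoidHom hφ1inj δ
    have hF' : ∀ k : ↥Ksub, F (φ1 k) = ψh (k : E) 0 - φh (k : E) 0 := fun k => hF k
    -- build the automorphism on the model
    set g : (Fin (r' + 1) → ZMod d) → (Fin (r' + 1) → ZMod d) :=
      fun y => Fin.cons (y 0 + F (π y)) (fun j => ε1 (π y) j) with hg
    have hgadd : ∀ y z, g (y + z) = g y + g z := by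
      intro y z
      have hπadd : π (y + z) = π y + π z := map_add π y z
      funext i
      refine Fin.cases ?_ (fun j => ?_) i
      · simp only [hg, Fin.cons_zero, Pi.add_apply, hπadd, map_add]
        ring
      · simp only [hg, Fin.cons_succ, Pi.add_apply, hπadd, map_add]
    set εL : (Fin (r' + 1) → ZMod d) →ₗ[ZMod d] (Fin (r' + 1) → ZMod d) :=
      (AddMonoidHom.mk' g hgadd).toZModLinearMap d with hεL
    have hεLapp : ∀ y, εL y = g y := fun y => rfl
    have hεinj : Function.Injective εL := by
      have hker : ∀ y, εL y = 0 → y = 0 := by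
        intro y hy
        have h0 : g y = 0 := by rw [← hεLapp]; exact hy
        have htail : ε1 (π y) = 0 := by
          funext j
          have := congrFun h0 j.succ
          rw [hg] at this
          simpa [Fin.cons_succ] using this
        have hπy : π y = 0 := by
          have := ε1.injective (by rw [htail, map_zero] : ε1 (π y) = ε1 0)
          exact this
        have h00 : y 0 = 0 := by
          have := congrFun h0 0
          rw [hg] at this
          simpa [Fin.cons_zero, hπy] using this
        funext i
        refine Fin.cases ?_ (fun j => ?_) i
        · exact h00
        · have := congrFun hπy j
          rw [hπapp] at this
          simpa using this
      intro a b hab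
      have : a - b = 0 := hker _ (by rw [map_sub, hab, sub_self])
      exact sub_eq_zero.mp this
    have hεbij : Function.Bijective εL := (Finite.injective_iff_bijective).mp hεinj
    set εh : (Fin (r' + 1) → ZMod d) ≃ₗ[ZMod d] (Fin (r' + 1) → ZMod d) :=
      LinearEquiv.ofBijective εL hεbij with hεh
    have hεhapp : ∀ y, εh y = g y := fun y => rfl
    -- main computation
    have hmain : ∀ e : E, ψh e = εh (φh e) := by
      intro e
      set c : ℕ := (ρ e).val with hcdef
      set k : E := e - c • x with hkdef
      have hkK : k ∈ Ksub := hdecomp e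
      have he : e = k + c • x := by rw [hkdef, sub_add_cancel]
      have hφe : φh e = φh k + c • φh x := by rw [he, map_add, map_nsmul]
      have hψe : ψh e = ψh k + c • ψh x := by rw [he, map_add, map_nsmul]
      have hπφe : π (φh e) = φ1 ⟨k, hkK⟩ := by
        have h7 : φ1 ⟨k, hkK⟩ = π (φh k) := rfl
        rw [hφe, map_add, map_nsmul, hφhx, hπcons, h7]
        have h8 : (c • fun _ => (0 : ZMod d)) = (0 : Fin r' → ZMod d) := by
          funext j; simp
        rw [h8, add_zero]
      have h0φe : φh e 0 = φh k 0 + (c : ZMod d) * ((d / m : ℕ) : ZMod d) := by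
        rw [hφe]
        simp [Pi.add_apply, Pi.smul_apply, hφhx, Fin.cons_zero, nsmul_eq_mul]
      have h9 : εh (φh e) = Fin.cons (φh e 0 + F (π (φh e)))
          (fun j => ε1 (π (φh e)) j) := rfl
      rw [h9]
      funext i
      refine Fin.cases ?_ (fun j => ?_) i
      · have h0ψe : ψh e 0 = ψh k 0 + (c : ZMod d) * ((d / m : ℕ) : ZMod d) := by
          rw [hψe]
          simp [Pi.add_apply, Pi.smul_apply, hψhx, Fin.cons_zero, nsmul_eq_mul]
        rw [Fin.cons_zero, hπφe, hF' ⟨k, hkK⟩, h0φe, h0ψe]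
        ring
      · rw [Fin.cons_succ, hπφe, ← hε1 ⟨k, hkK⟩]
        have h4 : ψ1 ⟨k, hkK⟩ j = ψh k j.succ := rfl
        rw [h4, hψe]
        simp [Pi.add_apply, Pi.smul_apply, hψhx, Fin.cons_succ]
    refine ⟨Φφ.trans (εh.trans Φψ.symm), fun e => ?_⟩
    have h5 : ψh e = Φψ (ψ e) := rfl
    have h6 : φh e = Φφ (φ e) := rfl
    have := hmain e
    rw [h5, h6] at this
    rw [LinearEquiv.trans_apply, LinearEquiv.trans_apply, ← this, LinearEquiv.symm_apply_apply]
end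
end S4

/-- Let `F = ℤ/dℤ` (`d ≥ 2`).  Given two injective `F`-linear maps
`φ, ψ : E → L` from a finite `F`-module `E` into a finite free `F`-module `L`,
there is an automorphism `ε` of `L` with `ψ = ε ∘ φ`. -/
theorem statement4 (d : ℕ) (hd : 2 ≤ d)
    (E : Type) [AddCommGroup E] [Module (ZMod d) E] [Finite E]
    (L : Type) [AddCommGroup L] [Module (ZMod d) L] [Finite L]
    (hLfree : ∃ r : ℕ, Nonempty (L ≃ₗ[ZMod d] (Fin r → ZMod d)))
    (φ ψ : E →ₗ[ZMod d] L)
    (hφ : Function.Injective φ) (hψ : Function.Injective ψ) :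
    ∃ ε : L ≃ₗ[ZMod d] L, ∀ x, ψ x = ε (φ x) := by
  obtain ⟨r, ⟨eL⟩⟩ := hLfree
  obtain ⟨ε', hε'⟩ := S4.key d hd (Nat.card E) E r
    (eL.toLinearMap.comp φ) (eL.toLinearMap.comp ψ) le_rfl
    (eL.injective.comp hφ) (eL.injective.comp hψ)
  refine ⟨(eL.trans ε').trans eL.symm, fun x => ?_⟩
  have h := hε' x
  simp only [LinearMap.comp_apply, LinearEquiv.coe_coe] at h
  rw [LinearEquiv.trans_apply, LinearEquiv.trans_apply, ← h, LinearEquiv.symm_apply_apply]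
end

section
/- Let F = ℤ/dℤ. Suppose given two short exact sequences of finite F-modules 0 → A₁ → A₂ → A₃ → 0 and 0 → F₁ → F₂ → F₃ → 0 with F₁, F₂, F₃ free, together with two morphisms of short exact sequences (φᵢ) and (ψᵢ) from the first to the second with all φᵢ, ψᵢ injective. If ε₁ ∈ Aut(F₁) and ε₃ ∈ Aut(F₃) satisfy ψ₁ = ε₁∘φ₁ and ψ₃ = ε₃∘φ₃, then there exists ε₂ ∈ Aut(F₂) such that ψ₂ = ε₂∘φ₂ and (ε₁, ε₂, ε₃) is an automorphism of the short exact sequence 0 → F₁ → F₂ → F₃ → 0. -/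
lemma zmod_exists_mul (d : ℕ) [NeZero d] (a q : ZMod d)
    (h : ∀ c : ZMod d, c * a = 0 → c * q = 0) : ∃ m, a * m = q := by
  set k := Nat.gcd (ZMod.val a) d with hk
  have hkd : k ∣ d := Nat.gcd_dvd_right _ _
  have hka : k ∣ (ZMod.val a) := Nat.gcd_dvd_left _ _
  have hk0 : 0 < k := Nat.gcd_pos_of_pos_right _ (NeZero.pos d)
  have hav : ((ZMod.val a : ℕ) : ZMod d) = a := ZMod.natCast_rightInverse a
  have hqv : ((ZMod.val q : ℕ) : ZMod d) = q := ZMod.natCast_rightInverse q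
  have hca : ((d / k : ℕ) : ZMod d) * a = 0 := by
    rw [← hav, ← Nat.cast_mul, ZMod.natCast_eq_zero_iff]
    obtain ⟨t, ht⟩ := hka
    rw [ht, ← mul_assoc, Nat.div_mul_cancel hkd]
    exact Dvd.intro t rfl
  have hq : ((d / k : ℕ) : ZMod d) * q = 0 := h _ hca
  have hkq : k ∣ ZMod.val q := by
    rw [← hqv, ← Nat.cast_mul, ZMod.natCast_eq_zero_iff] at hq
    obtain ⟨u, hu⟩ := hq
    have hdk0 : 0 < d / k := Nat.div_pos (Nat.le_of_dvd (NeZero.pos d) hkd) hk0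
    have h2 : d / k * ZMod.val q = d / k * (k * u) := by
      rw [hu, ← mul_assoc, Nat.div_mul_cancel hkd]
    exact ⟨u, Nat.eq_of_mul_eq_mul_left hdk0 h2⟩
  have bez : (k : ℤ) = (ZMod.val a) * Nat.gcdA (ZMod.val a) d + d * Nat.gcdB (ZMod.val a) d :=
    Nat.gcd_eq_gcd_ab _ _
  have hax : a * ((Nat.gcdA (ZMod.val a) d : ℤ) : ZMod d) = ((k : ℕ) : ZMod d) := by
    have h3 := congrArg (fun z : ℤ => ((z : ℤ) : ZMod d)) bez
    push_cast at h3
    rw [ZMod.natCast_self, zero_mul, add_zero, hav] at h3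
    exact h3.symm
  refine ⟨((Nat.gcdA (ZMod.val a) d : ℤ) : ZMod d) * ((ZMod.val q / k : ℕ) : ZMod d), ?_⟩
  rw [← mul_assoc, hax, ← Nat.cast_mul, Nat.mul_div_cancel' hkq, hqv]

lemma exists_smul_eq' (d r : ℕ) [NeZero d] (a : ZMod d) (q : Fin r → ZMod d)
    (h : ∀ c : ZMod d, c * a = 0 → c • q = 0) : ∃ m, a • m = q := by
  choose m hm using fun i => zmod_exists_mul d a (q i) (fun c hc => by
    have := congrFun (h c hc) i
    simpa [smul_eq_mul] using this)
  exact ⟨m, funext fun i => by simpa [smul_eq_mul] using hm i⟩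

lemma baer_of_free (d : ℕ) [NeZero d] (Q : Type) [AddCommGroup Q] [Module (ZMod d) Q]
    (r : ℕ) (e : Q ≃ₗ[ZMod d] (Fin r → ZMod d)) : Module.Baer (ZMod d) Q := by
  haveI : IsPrincipalIdealRing (ZMod d) :=
    IsPrincipalIdealRing.of_surjective (Int.castRingHom (ZMod d)) ZMod.intCast_surjective
  intro I g
  obtain ⟨a, rfl⟩ : ∃ a, I = Ideal.span {a} :=
    ⟨_, (Submodule.IsPrincipal.span_singleton_generator I).symm⟩
  have hmem : a ∈ Ideal.span {a} := Ideal.mem_span_singleton_self a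
  set q := e (g ⟨a, hmem⟩) with hq
  have hcond : ∀ c : ZMod d, c * a = 0 → c • q = 0 := fun c hc => by
    have h0 : (c • (⟨a, hmem⟩ : Ideal.span {a})) = 0 := by
      ext; simpa [smul_eq_mul] using hc
    rw [hq, ← map_smul, ← map_smul, h0, map_zero, map_zero]
  obtain ⟨m, hm⟩ := exists_smul_eq' d r a q hcond
  have key : a • e.symm m = g ⟨a, hmem⟩ := by
    apply e.injective; rw [map_smul, e.apply_symm_apply, hm, hq]
  refine ⟨LinearMap.toSpanSingleton (ZMod d) Q (e.symm m), fun x hx => ?_⟩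
  obtain ⟨c, hc⟩ := Ideal.mem_span_singleton'.mp hx
  have hx' : (⟨x, hx⟩ : Ideal.span {a}) = c • ⟨a, hmem⟩ := by
    ext; simp [← hc, smul_eq_mul]
  rw [hx', map_smul, LinearMap.toSpanSingleton_apply, ← hc, ← key, mul_smul]


/-- Let `F = ℤ/dℤ` (`d ≥ 2`).  Given two short exact sequences of
finite `F`-modules `0 → A₁ → A₂ → A₃ → 0` and `0 → F₁ → F₂ → F₃ → 0` with
`F₁, F₂, F₃` free, two injective morphisms `(φᵢ)`, `(ψᵢ)` of short exact
sequences from the first to the second, and automorphisms `ε₁` of `F₁` and `ε₃`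
of `F₃` with `ψ₁ = ε₁ ∘ φ₁` and `ψ₃ = ε₃ ∘ φ₃`, there is an automorphism `ε₂` of
`F₂` such that `ψ₂ = ε₂ ∘ φ₂` and `(ε₁, ε₂, ε₃)` is an automorphism of the short
exact sequence `0 → F₁ → F₂ → F₃ → 0`. -/
theorem statement5 (d : ℕ) (hd : 2 ≤ d)
    (A₁ A₂ A₃ F₁ F₂ F₃ : Type)
    [AddCommGroup A₁] [Module (ZMod d) A₁] [Finite A₁]
    [AddCommGroup A₂] [Module (ZMod d) A₂] [Finite A₂]
    [AddCommGroup A₃] [Module (ZMod d) A₃] [Finite A₃]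
    [AddCommGroup F₁] [Module (ZMod d) F₁] [Finite F₁]
    [AddCommGroup F₂] [Module (ZMod d) F₂] [Finite F₂]
    [AddCommGroup F₃] [Module (ZMod d) F₃] [Finite F₃]
    (hF₁ : ∃ r : ℕ, Nonempty (F₁ ≃ₗ[ZMod d] (Fin r → ZMod d)))
    (hF₂ : ∃ r : ℕ, Nonempty (F₂ ≃ₗ[ZMod d] (Fin r → ZMod d)))
    (hF₃ : ∃ r : ℕ, Nonempty (F₃ ≃ₗ[ZMod d] (Fin r → ZMod d)))
    -- the two short exact sequences
    (iA : A₁ →ₗ[ZMod d] A₂) (pA : A₂ →ₗ[ZMod d] A₃)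
    (hiA : Function.Injective iA) (hpA : Function.Surjective pA)
    (hexA : ∀ y, pA y = 0 ↔ ∃ x, iA x = y)
    (iF : F₁ →ₗ[ZMod d] F₂) (pF : F₂ →ₗ[ZMod d] F₃)
    (hiF : Function.Injective iF) (hpF : Function.Surjective pF)
    (hexF : ∀ y, pF y = 0 ↔ ∃ x, iF x = y)
    -- the morphism (φ₁, φ₂, φ₃), injective
    (φ₁ : A₁ →ₗ[ZMod d] F₁) (φ₂ : A₂ →ₗ[ZMod d] F₂) (φ₃ : A₃ →ₗ[ZMod d] F₃)
    (hφ₁ : Function.Injective φ₁) (hφ₂ : Function.Injective φ₂)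
    (hφ₃ : Function.Injective φ₃)
    (hφc1 : ∀ x, φ₂ (iA x) = iF (φ₁ x)) (hφc2 : ∀ x, φ₃ (pA x) = pF (φ₂ x))
    -- the morphism (ψ₁, ψ₂, ψ₃), injective
    (ψ₁ : A₁ →ₗ[ZMod d] F₁) (ψ₂ : A₂ →ₗ[ZMod d] F₂) (ψ₃ : A₃ →ₗ[ZMod d] F₃)
    (hψ₁ : Function.Injective ψ₁) (hψ₂ : Function.Injective ψ₂)
    (hψ₃ : Function.Injective ψ₃)
    (hψc1 : ∀ x, ψ₂ (iA x) = iF (ψ₁ x)) (hψc2 : ∀ x, ψ₃ (pA x) = pF (ψ₂ x))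
    -- the given automorphisms
    (ε₁ : F₁ ≃ₗ[ZMod d] F₁) (ε₃ : F₃ ≃ₗ[ZMod d] F₃)
    (hε₁ : ∀ x, ψ₁ x = ε₁ (φ₁ x)) (hε₃ : ∀ x, ψ₃ x = ε₃ (φ₃ x)) :
    ∃ ε₂ : F₂ ≃ₗ[ZMod d] F₂,
      (∀ x, ψ₂ x = ε₂ (φ₂ x)) ∧
      (∀ x, ε₂ (iF x) = iF (ε₁ x)) ∧
      (∀ y, pF (ε₂ y) = ε₃ (pF y)) := by
  haveI : NeZero d := ⟨by omega⟩
  obtain ⟨r₃, ⟨e₃⟩⟩ := hF₃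
  obtain ⟨r₁, ⟨e₁⟩⟩ := hF₁
  -- basis of F₃ and a splitting s of pF
  let b : Module.Basis (Fin r₃) (ZMod d) F₃ := Module.Basis.ofEquivFun e₃
  choose sec hsec using hpF
  let s : F₃ →ₗ[ZMod d] F₂ := b.constr (ZMod d) (fun i => sec (b i))
  have hps : ∀ y, pF (s y) = y := by
    have h : pF ∘ₗ s = LinearMap.id := b.ext (fun i => by
      simp [s, Module.Basis.constr_basis, hsec])
    intro y; exact congrArg (fun f => f y) (congrArg DFunLike.coe h)
  have hpFiF : ∀ x, pF (iF x) = 0 := fun x => (hexF _).mpr ⟨x, rfl⟩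
  -- the retraction rr : F₂ → F₁
  let K : F₂ →ₗ[ZMod d] F₂ := LinearMap.id - s ∘ₗ pF
  have hK : ∀ x, K x ∈ LinearMap.range iF := by
    intro x
    rw [LinearMap.mem_range]
    refine (hexF _).mp ?_
    simp [K, hps]
  let eI : F₁ ≃ₗ[ZMod d] LinearMap.range iF := LinearEquiv.ofInjective iF hiF
  let rr : F₂ →ₗ[ZMod d] F₁ :=
    eI.symm.toLinearMap ∘ₗ (K.codRestrict (LinearMap.range iF) hK)
  have hiFrr : ∀ x, iF (rr x) = x - s (pF x) := by
    intro x
    have h1 : (eI (rr x) : F₂) = K x := by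
      simp only [rr, LinearMap.comp_apply, LinearEquiv.coe_coe,
        LinearEquiv.apply_symm_apply, LinearMap.codRestrict_apply]
    have h2 : (eI (rr x) : F₂) = iF (rr x) := rfl
    rw [← h2, h1]; rfl
  have hrr_iF : ∀ x, rr (iF x) = x := by
    intro x
    apply hiF
    rw [hiFrr, hpFiF, map_zero, sub_zero]
  have hrr_ker : ∀ x, pF x = 0 → iF (rr x) = x := by
    intro x hx; rw [hiFrr, hx, map_zero, sub_zero]
  -- the defect map δ
  let δ : A₂ →ₗ[ZMod d] F₁ := rr ∘ₗ ψ₂ - ε₁.toLinearMap ∘ₗ rr ∘ₗ φ₂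
  have hδiA : ∀ x : A₁, δ (iA x) = 0 := by
    intro x
    simp only [δ, LinearMap.sub_apply, LinearMap.comp_apply, LinearEquiv.coe_coe]
    rw [hψc1, hφc1, hrr_iF, hrr_iF, hε₁, sub_self]
  -- factor δ through pA
  have hker : LinearMap.ker pA ≤ LinearMap.ker δ := by
    intro x hx
    rw [LinearMap.mem_ker] at hx ⊢
    obtain ⟨y, rfl⟩ := (hexA x).mp hx
    exact hδiA y
  let eQ := pA.quotKerEquivOfSurjective hpA
  let δb : A₃ →ₗ[ZMod d] F₁ :=
    (Submodule.liftQ (LinearMap.ker pA) δ hker) ∘ₗ eQ.symm.toLinearMap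
  have hδb : ∀ a, δb (pA a) = δ a := by
    intro a
    have h1 : eQ (Submodule.Quotient.mk a) = pA a := by
      simp [eQ, LinearMap.quotKerEquivOfSurjective, LinearMap.quotKerEquivRange]
    have h2 : eQ.symm (pA a) = Submodule.Quotient.mk a := by
      rw [← h1, LinearEquiv.symm_apply_apply]
    simp only [δb, LinearMap.comp_apply, LinearEquiv.coe_coe, h2]
    exact Submodule.liftQ_apply _ _ _
  -- extend δb ∘ φ₃⁻¹ to η : F₃ → F₁ using self-injectivity (Baer)
  have baer : Module.Baer (ZMod d) F₁ := baer_of_free d F₁ r₁ e₁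
  obtain ⟨η, hη⟩ := baer.extension_property φ₃ hφ₃ δb
  have hη' : ∀ c, η (φ₃ c) = δb c := fun c => congrArg (fun f => f c) (congrArg DFunLike.coe hη)
  -- the endomorphism E
  let E : F₂ →ₗ[ZMod d] F₂ :=
    iF ∘ₗ (ε₁.toLinearMap ∘ₗ rr + η ∘ₗ pF) + s ∘ₗ (ε₃.toLinearMap ∘ₗ pF)
  have hE : ∀ x, E x = iF (ε₁ (rr x) + η (pF x)) + s (ε₃ (pF x)) := fun x => rfl
  have hEiF : ∀ x, E (iF x) = iF (ε₁ x) := by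
    intro x
    rw [hE, hpFiF, hrr_iF, map_zero, map_zero, map_zero, add_zero, add_zero]
  have hpFE : ∀ x, pF (E x) = ε₃ (pF x) := by
    intro x
    rw [hE, map_add, hpFiF, hps, zero_add]
  have hEφ : ∀ a, E (φ₂ a) = ψ₂ a := by
    intro a
    have hpφ : pF (φ₂ a) = φ₃ (pA a) := (hφc2 a).symm
    have hpψ : pF (ψ₂ a) = ε₃ (pF (φ₂ a)) := by
      rw [← hψc2, hε₃, hφc2]
    have hδa : iF (δ a) = ψ₂ a - s (ε₃ (pF (φ₂ a))) - iF (ε₁ (rr (φ₂ a))) := by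
      simp only [δ, LinearMap.sub_apply, LinearMap.comp_apply, LinearEquiv.coe_coe, map_sub]
      rw [hiFrr, hpψ]
    rw [hE, hpφ, hη', hδb, map_add, hδa, ← hpφ]
    abel
  -- E is bijective
  have hEinj0 : ∀ x, E x = 0 → x = 0 := by
    intro x hx
    have h1 : pF x = 0 := by
      have := hpFE x
      rw [hx, map_zero] at this
      exact ε₃.injective (by rw [← this, map_zero])
    obtain ⟨u, rfl⟩ := (hexF x).mp h1
    rw [hEiF] at hx
    have : ε₁ u = 0 := hiF (by rw [hx, map_zero])
    have : u = 0 := ε₁.injective (by rw [this, map_zero])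
    rw [this, map_zero]
  have hEinj : Function.Injective E := by
    intro x y hxy
    have := hEinj0 (x - y) (by rw [map_sub, hxy, sub_self])
    exact sub_eq_zero.mp this
  have hEsurj : Function.Surjective E := by
    intro z
    set y := ε₃.symm (pF z) with hy
    have hw : pF (z - E (s y)) = 0 := by
      rw [map_sub, hpFE, hps, hy, LinearEquiv.apply_symm_apply, sub_self]
    obtain ⟨u, hu⟩ := (hexF _).mp hw
    refine ⟨iF (ε₁.symm u) + s y, ?_⟩
    rw [map_add, hEiF, LinearEquiv.apply_symm_apply, hu]
    abel
  refine ⟨LinearEquiv.ofBijective E ⟨hEinj, hEsurj⟩, fun x => (hEφ x).symm,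
    fun x => hEiF x, fun y => hpFE y⟩
end

section
/- Let F = ℤ/dℤ and Γ a profinite group. Suppose given a commutative diagram of short exact sequences of finite free F-modules: the top row 0 → L₁ → L₂ → L₃ → 0 consisting of Γ-modules and Γ-equivariant maps, the bottom row the split sequence 0 → F^r → F^r ⊕ F^s → F^s → 0, with injective vertical maps L₁ → F^r and L₃ → F^s, where F^r and F^s carry Γ-actions making these vertical maps Γ-equivariant, and where F^s decomposes as L₃ ⊕ L' with Γ acting trivially on L'. Then there exists a Γ-action on F^r ⊕ F^s and a Γ-equivariant injection L₂ → F^r ⊕ F^s making the whole diagram a commutative diagram of Γ-modules, with the bottom row Γ-equivariant. -/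
open Function

/-- A finite discrete `d`-torsion module over a topological group `Γ`:
a finite `ZMod d`-module with a `Γ`-representation that is continuous for the
discrete topology on the module. -/
structure FdMod (d : ℕ) (Γ : Type) [Group Γ] [TopologicalSpace Γ] : Type 1 where
  V : Type
  [acg : AddCommGroup V]
  [mod : Module (ZMod d) V]
  [fin : Finite V]
  ρ : Representation (ZMod d) Γ V
  cont : ∀ v : V, @Continuous Γ V _ ⊥ (fun γ => ρ γ v)

attribute [instance] FdMod.acg FdMod.mod FdMod.fin

namespace FdMod

variable {d : ℕ} {Γ : Type} [Group Γ] [TopologicalSpace Γ]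

/-- Morphisms: `Γ`-equivariant `ZMod d`-linear maps. -/
def Hom (M N : FdMod d Γ) : Type :=
  {f : M.V →ₗ[ZMod d] N.V // ∀ γ v, f (M.ρ γ v) = N.ρ γ (f v)}

def idHom (M : FdMod d Γ) : M.Hom M := ⟨LinearMap.id, fun _ _ => rfl⟩

def castHom {M N : FdMod d Γ} (h : M = N) : M.Hom N := by subst h; exact idHom M

def zeroHom (M N : FdMod d Γ) : M.Hom N := ⟨0, by intro γ v; simp⟩

/-- Transport of elements along an equality of objects. -/
def vcast {M N : FdMod d Γ} (h : M = N) (x : M.V) : N.V := cast (congrArg FdMod.V h) x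

/-- Freeness as a `ZMod d`-module. -/
def IsFree (M : FdMod d Γ) : Prop :=
  ∃ r : ℕ, Nonempty (M.V ≃ₗ[ZMod d] (Fin r → ZMod d))

end FdMod

/-- Let `F = ℤ/dℤ` and `Γ` a profinite group.  Given a short exact
sequence `0 → L₁ → L₂ → L₃ → 0` of finite free `F`-modules with continuous
`Γ`-action, injective `Γ`-equivariant maps `u₁ : L₁ → F^r`, `u₃ : L₃ → F^s` into
`F^r`, `F^s` equipped with continuous `Γ`-actions, a decomposition
`F^s = u₃(L₃) ⊕ L'` with `Γ` acting trivially on `L'`, and the bottom split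
sequence `0 → F^r → F^r ⊕ F^s → F^s → 0`, there is a continuous `Γ`-action on
`F^r ⊕ F^s` making the canonical inclusion and projection equivariant, together
with a `Γ`-equivariant injection `u₂ : L₂ → F^r ⊕ F^s` making the whole diagram
commute. -/
theorem statement8 (d : ℕ) (hd : 2 ≤ d)
    (Γ : Type) [Group Γ] [TopologicalSpace Γ] [IsTopologicalGroup Γ]
    [CompactSpace Γ] [T2Space Γ] [TotallyDisconnectedSpace Γ]
    (L₁ L₂ L₃ : FdMod d Γ)
    (hL₁ : FdMod.IsFree L₁) (hL₂ : FdMod.IsFree L₂) (hL₃ : FdMod.IsFree L₃)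
    (iL : L₁.Hom L₂) (pL : L₂.Hom L₃)
    (hi : Function.Injective iL.1) (hp : Function.Surjective pL.1)
    (hex : ∀ y, pL.1 y = 0 ↔ ∃ x, iL.1 x = y)
    (r s : ℕ)
    (ρr : Representation (ZMod d) Γ (Fin r → ZMod d))
    (hρr : ∀ v, @Continuous Γ (Fin r → ZMod d) _ ⊥ (fun γ => ρr γ v))
    (ρs : Representation (ZMod d) Γ (Fin s → ZMod d))
    (hρs : ∀ v, @Continuous Γ (Fin s → ZMod d) _ ⊥ (fun γ => ρs γ v))
    (u₁ : L₁.V →ₗ[ZMod d] (Fin r → ZMod d)) (hu₁ : Function.Injective u₁)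
    (hu₁eq : ∀ γ x, u₁ (L₁.ρ γ x) = ρr γ (u₁ x))
    (u₃ : L₃.V →ₗ[ZMod d] (Fin s → ZMod d)) (hu₃ : Function.Injective u₃)
    (hu₃eq : ∀ γ x, u₃ (L₃.ρ γ x) = ρs γ (u₃ x))
    (L' : Submodule (ZMod d) (Fin s → ZMod d))
    (hcompl : IsCompl (LinearMap.range u₃) L')
    (htriv : ∀ γ, ∀ y ∈ L', ρs γ y = y) :
    ∃ ρ₂ : Representation (ZMod d) Γ ((Fin r → ZMod d) × (Fin s → ZMod d)),
      (∀ v, @Continuous Γ ((Fin r → ZMod d) × (Fin s → ZMod d)) _ ⊥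
        (fun γ => ρ₂ γ v)) ∧
      (∀ γ x, ρ₂ γ (x, 0) = (ρr γ x, 0)) ∧
      (∀ γ p, (ρ₂ γ p).2 = ρs γ p.2) ∧
      ∃ u₂ : L₂.V →ₗ[ZMod d] (Fin r → ZMod d) × (Fin s → ZMod d),
        Function.Injective u₂ ∧
        (∀ γ x, u₂ (L₂.ρ γ x) = ρ₂ γ (u₂ x)) ∧
        (∀ x, u₂ (iL.1 x) = (u₁ x, 0)) ∧
        (∀ x, (u₂ x).2 = u₃ (pL.1 x)) := by

  classical
  -- A linear splitting σ of pL, using freeness of L₃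
  obtain ⟨n, ⟨e⟩⟩ := hL₃
  let b : Module.Basis (Fin n) (ZMod d) L₃.V := Module.Basis.ofEquivFun e
  choose sec hsec using hp
  let σ : L₃.V →ₗ[ZMod d] L₂.V := b.constr ℕ (fun i => sec (b i))
  have hσ : ∀ t, pL.1 (σ t) = t := by
    have h : pL.1 ∘ₗ σ = LinearMap.id := by
      apply b.ext
      intro i
      simp [σ, Module.Basis.constr_basis, hsec]
    intro t
    exact DFunLike.congr_fun h t
  -- retraction j : L₂ → L₁
  let q : L₂.V →ₗ[ZMod d] L₂.V := LinearMap.id - σ ∘ₗ pL.1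
  have hq0 : ∀ x, pL.1 (q x) = 0 := by
    intro x
    simp [q, hσ, map_sub]
  have hqmem : ∀ x, q x ∈ LinearMap.range iL.1 := by
    intro x
    obtain ⟨y, hy⟩ := (hex (q x)).1 (hq0 x)
    exact ⟨y, hy⟩
  let eI : L₁.V ≃ₗ[ZMod d] LinearMap.range iL.1 := LinearEquiv.ofInjective iL.1 hi
  let qc : L₂.V →ₗ[ZMod d] LinearMap.range iL.1 := LinearMap.codRestrict _ q hqmem
  let j : L₂.V →ₗ[ZMod d] L₁.V := (eI.symm : LinearMap.range iL.1 →ₗ[ZMod d] L₁.V) ∘ₗ qc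
  have heI : ∀ z : LinearMap.range iL.1, iL.1 (eI.symm z) = (z : L₂.V) := by
    intro z
    have : ((eI (eI.symm z)) : L₂.V) = iL.1 (eI.symm z) :=
      LinearEquiv.ofInjective_apply iL.1 (eI.symm z)
    rw [eI.apply_symm_apply] at this
    exact this.symm
  have hij : ∀ x, iL.1 (j x) = q x := by
    intro x
    exact heI ⟨q x, hqmem x⟩
  have hdec : ∀ x, x = iL.1 (j x) + σ (pL.1 x) := by
    intro x
    rw [hij]
    simp [q]
  have hji : ∀ y, j (iL.1 y) = y := by
    intro y
    apply hi
    rw [hij]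
    have hpiL : pL.1 (iL.1 y) = 0 := (hex (iL.1 y)).2 ⟨y, rfl⟩
    simp [q, hpiL]
  have hjσ : ∀ t, j (σ t) = 0 := by
    intro t
    apply hi
    rw [hij]
    simp [q, hσ]
  -- retraction w : F^s → L₃ killing L'
  let eU : L₃.V ≃ₗ[ZMod d] LinearMap.range u₃ := LinearEquiv.ofInjective u₃ hu₃
  let w : (Fin s → ZMod d) →ₗ[ZMod d] L₃.V :=
    (eU.symm : LinearMap.range u₃ →ₗ[ZMod d] L₃.V) ∘ₗ
      (LinearMap.range u₃).linearProjOfIsCompl L' hcompl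
  have hwu : ∀ t, w (u₃ t) = t := by
    intro t
    have h1 : ((LinearMap.range u₃).linearProjOfIsCompl L' hcompl) (u₃ t)
        = ⟨u₃ t, ⟨t, rfl⟩⟩ :=
      Submodule.linearProjOfIsCompl_apply_left hcompl ⟨u₃ t, ⟨t, rfl⟩⟩
    show (eU.symm : LinearMap.range u₃ →ₗ[ZMod d] L₃.V)
        (((LinearMap.range u₃).linearProjOfIsCompl L' hcompl) (u₃ t)) = t
    rw [h1]
    apply hu₃
    have : ((eU (eU.symm ⟨u₃ t, ⟨t, rfl⟩⟩)) : (Fin s → ZMod d)) = u₃ (eU.symm ⟨u₃ t, ⟨t, rfl⟩⟩) :=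
      LinearEquiv.ofInjective_apply u₃ _
    rw [eU.apply_symm_apply] at this
    exact this.symm
  have hwL : ∀ y ∈ L', w y = 0 := by
    intro y hy
    have h1 : ((LinearMap.range u₃).linearProjOfIsCompl L' hcompl) y = 0 :=
      Submodule.linearProjOfIsCompl_apply_right hcompl ⟨y, hy⟩
    show (eU.symm : LinearMap.range u₃ →ₗ[ZMod d] L₃.V)
        (((LinearMap.range u₃).linearProjOfIsCompl L' hcompl) y) = 0
    rw [h1]
    simp
  -- the cocycle
  let cmap : Γ → (Fin s → ZMod d) →ₗ[ZMod d] (Fin r → ZMod d) :=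
    fun γ => u₁ ∘ₗ j ∘ₗ (L₂.ρ γ : L₂.V →ₗ[ZMod d] L₂.V) ∘ₗ σ ∘ₗ w
  have hdep : ∀ γ bb, cmap γ bb = u₁ (j (L₂.ρ γ (σ (w bb)))) := fun γ bb => rfl
  -- key equivariance identity
  have hkey : ∀ γ x, u₁ (j (L₂.ρ γ x)) = ρr γ (u₁ (j x)) + cmap γ (u₃ (pL.1 x)) := by
    intro γ x
    have h1 : L₂.ρ γ x = iL.1 (L₁.ρ γ (j x)) + L₂.ρ γ (σ (pL.1 x)) := by
      conv_lhs => rw [hdec x]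
      rw [map_add, iL.2]
    rw [h1, map_add, map_add, hji, hu₁eq, hdep, hwu]
  have hc1 : ∀ bb, cmap 1 bb = 0 := by
    intro bb
    rw [hdep]
    simp [hjσ]
  have hcoc : ∀ γ₁ γ₂ bb, cmap (γ₁ * γ₂) bb = ρr γ₁ (cmap γ₂ bb) + cmap γ₁ (ρs γ₂ bb) := by
    intro γ₁ γ₂ bb
    obtain ⟨t, y, hy, rfl⟩ : ∃ t y, y ∈ L' ∧ bb = u₃ t + y := by
      have hb : bb ∈ LinearMap.range u₃ ⊔ L' := by
        rw [hcompl.sup_eq_top]; trivial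
      rw [Submodule.mem_sup] at hb
      obtain ⟨y₁, hy₁, y₂, hy₂, h⟩ := hb
      obtain ⟨t, rfl⟩ := hy₁
      exact ⟨t, y₂, hy₂, h.symm⟩
    have hwb : w (u₃ t + y) = t := by rw [map_add, hwu, hwL y hy, add_zero]
    have hρsb : ρs γ₂ (u₃ t + y) = u₃ (L₃.ρ γ₂ t) + y := by
      rw [map_add, htriv γ₂ y hy, ← hu₃eq]
    have hwb2 : w (ρs γ₂ (u₃ t + y)) = L₃.ρ γ₂ t := by
      rw [hρsb, map_add, hwu, hwL y hy, add_zero]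
    rw [hdep (γ₁ * γ₂), hdep γ₂, hdep γ₁, hwb, hwb2]
    have hmul : L₂.ρ (γ₁ * γ₂) (σ t) = L₂.ρ γ₁ (L₂.ρ γ₂ (σ t)) := by
      rw [map_mul]
      rfl
    rw [hmul, hkey γ₁ (L₂.ρ γ₂ (σ t)), hdep γ₁]
    have hpρ : pL.1 (L₂.ρ γ₂ (σ t)) = L₃.ρ γ₂ t := by
      rw [pL.2, hσ]
    rw [hpρ, hwu]
  -- the representation on the direct sum
  let ρf : Γ → ((Fin r → ZMod d) × (Fin s → ZMod d)) →ₗ[ZMod d]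
      ((Fin r → ZMod d) × (Fin s → ZMod d)) :=
    fun γ => LinearMap.prod
      ((ρr γ : (Fin r → ZMod d) →ₗ[ZMod d] (Fin r → ZMod d)) ∘ₗ LinearMap.fst _ _ _
        + cmap γ ∘ₗ LinearMap.snd _ _ _)
      ((ρs γ : (Fin s → ZMod d) →ₗ[ZMod d] (Fin s → ZMod d)) ∘ₗ LinearMap.snd _ _ _)
  have hρf : ∀ γ p, ρf γ p = (ρr γ p.1 + cmap γ p.2, ρs γ p.2) := fun γ p => rfl
  let ρ₂ : Representation (ZMod d) Γ ((Fin r → ZMod d) × (Fin s → ZMod d)) :=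
    { toFun := ρf
      map_one' := by
        apply LinearMap.ext
        intro p
        rw [hρf]
        simp [hc1]
      map_mul' := by
        intro γ₁ γ₂
        apply LinearMap.ext
        intro p
        have hR : (ρf γ₁ * ρf γ₂) p = ρf γ₁ (ρf γ₂ p) := rfl
        rw [hR, hρf, hρf, hρf, hcoc]
        have h1 : ρr (γ₁ * γ₂) p.1 = ρr γ₁ (ρr γ₂ p.1) := by rw [map_mul]; rfl
        have h2 : ρs (γ₁ * γ₂) p.2 = ρs γ₁ (ρs γ₂ p.2) := by rw [map_mul]; rfl
        rw [h1, h2]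
        apply Prod.ext
        · simp [map_add]
          ring
        · rfl }
  have hρ₂app : ∀ γ p, ρ₂ γ p = (ρr γ p.1 + cmap γ p.2, ρs γ p.2) := fun γ p => rfl
  refine ⟨ρ₂, ?_, ?_, ?_, ?_⟩
  · -- continuity
    intro v
    letI tr : TopologicalSpace (Fin r → ZMod d) := ⊥
    letI ts : TopologicalSpace (Fin s → ZMod d) := ⊥
    letI tL2 : TopologicalSpace L₂.V := ⊥
    haveI : DiscreteTopology (Fin r → ZMod d) := ⟨rfl⟩
    haveI : DiscreteTopology (Fin s → ZMod d) := ⟨rfl⟩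
    haveI : DiscreteTopology L₂.V := ⟨rfl⟩
    have hbot : (instTopologicalSpaceProd :
        TopologicalSpace ((Fin r → ZMod d) × (Fin s → ZMod d))) = ⊥ :=
      DiscreteTopology.eq_bot
    rw [← hbot]
    haveI : ContinuousAdd (Fin r → ZMod d) := ⟨continuous_of_discreteTopology⟩
    have c1 : Continuous (fun γ : Γ => ρr γ v.1) := hρr v.1
    have c2 : Continuous (fun γ : Γ => L₂.ρ γ (σ (w v.2))) := L₂.cont (σ (w v.2))
    have c3 : Continuous (fun γ : Γ => cmap γ v.2) := by
      have : (fun γ : Γ => cmap γ v.2)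
          = (fun z : L₂.V => u₁ (j z)) ∘ (fun γ : Γ => L₂.ρ γ (σ (w v.2))) := rfl
      rw [this]
      exact continuous_of_discreteTopology.comp c2
    have c4 : Continuous (fun γ : Γ => ρs γ v.2) := hρs v.2
    exact (c1.add c3).prodMk c4
  · intro γ x
    rw [hρ₂app]
    simp
  · intro γ p
    rfl
  · -- the map u₂
    refine ⟨LinearMap.prod (u₁ ∘ₗ j) (u₃ ∘ₗ pL.1), ?_, ?_, ?_, ?_⟩
    · rw [injective_iff_map_eq_zero]
      intro x hx
      have hx1 : u₁ (j x) = 0 := congrArg Prod.fst hx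
      have hx2 : u₃ (pL.1 x) = 0 := congrArg Prod.snd hx
      have hp0 : pL.1 x = 0 := by
        apply hu₃
        simpa using hx2
      obtain ⟨y, rfl⟩ := (hex x).1 hp0
      have : j (iL.1 y) = 0 := by
        apply hu₁
        simpa using hx1
      rw [hji] at this
      rw [this, map_zero]
    · intro γ x
      rw [hρ₂app]
      apply Prod.ext
      · show u₁ (j (L₂.ρ γ x)) = ρr γ (u₁ (j x)) + cmap γ (u₃ (pL.1 x))
        exact hkey γ x
      · show u₃ (pL.1 (L₂.ρ γ x)) = ρs γ (u₃ (pL.1 x))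
        rw [pL.2, hu₃eq]
    · intro x
      have hpiL : pL.1 (iL.1 x) = 0 := (hex (iL.1 x)).2 ⟨x, rfl⟩
      apply Prod.ext
      · show u₁ (j (iL.1 x)) = u₁ x
        rw [hji]
      · show u₃ (pL.1 (iL.1 x)) = 0
        rw [hpiL, map_zero]
    · intro x
      rfl
end

section
/- Let A be an abelian category and E = (0 → B → E₁ → ... → Eₙ → A → 0) an n-extension whose Yoneda class is zero. Suppose there is a commutative diagram exhibiting triviality as in Oort's criterion: a middle n-extension G receiving maps from E and from the trivial-type extension (0 → B → B → 0 → ... → 0 → A → A → 0), compatibly with the identity on A and B. If K' := Ker(Gₙ → A) and s is the induced splitting of Gₙ → A, then the pullback of the (n-1)-extension 0 → B → G₁ → ... → G_{n-1} → K' → 0 along the map Eₙ → K' (defined via the retraction associated to s) yields an (n-1)-extension F of Eₙ by B together with a morphism of complexes E → F which is the identity on B and Eₙ. -/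
open CategoryTheory Category Limits ZeroObject

universe v u

/-- The data of a sequence `X 0 ⟶ X 1 ⟶ ⋯ ⟶ X (n+1)` in an abelian category;
an `n`-extension of `X (n+1)` by `X 0` when `IsExt` holds. -/
structure PreExt (C : Type u) [Category.{v} C] [Abelian C] (n : ℕ) where
  X : ℕ → C
  d : ∀ i, X i ⟶ X (i + 1)

namespace PreExt

variable {C : Type u} [Category.{v} C] [Abelian C] {n : ℕ}

/-- `E` is an exact `n`-extension: `0 → X 0 → ⋯ → X (n+1) → 0` is exact. -/
def IsExt (E : PreExt C n) : Prop :=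
  Mono (E.d 0) ∧ Epi (E.d n) ∧
    ∀ i, i + 1 ≤ n → ∃ w : E.d i ≫ E.d (i + 1) = 0,
      (ShortComplex.mk (E.d i) (E.d (i + 1)) w).Exact

/-- A morphism of `n`-extensions inducing the identity on both ends. -/
def Ladder (E F : PreExt C n) : Prop :=
  ∃ (h0 : E.X 0 = F.X 0) (h1 : E.X (n + 1) = F.X (n + 1))
    (φ : ∀ i, E.X i ⟶ F.X i),
    φ 0 = eqToHom h0 ∧ φ (n + 1) = eqToHom h1 ∧
    ∀ i, i ≤ n → E.d i ≫ φ (i + 1) = φ i ≫ F.d i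

/-- One step of the Yoneda equivalence relation. -/
def ExtRel (E F : PreExt C n) : Prop := E.IsExt ∧ F.IsExt ∧ Ladder E F

/-- Yoneda equivalence of `n`-extensions: the equivalence relation generated by
morphisms of extensions inducing the identity on both ends. -/
def YEquiv (E F : PreExt C n) : Prop := Relation.EqvGen ExtRel E F

end PreExt

section Triv

variable {C : Type u} [Category.{v} C] [Abelian C] (n : ℕ)

/-- Objects of the trivial ("split") `n`-extension `0 → B → B → 0 → ⋯ → 0 → A → A → 0`. -/
noncomputable def trivX (A B : C) : ℕ → C :=
  fun i => if i ≤ 1 then B else if n ≤ i then A else 0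

/-- The trivial `n`-extension of `A` by `B` (for `2 ≤ n`). -/
noncomputable def trivPreExt (hn : 2 ≤ n) (A B : C) : PreExt C n where
  X := trivX n A B
  d i :=
    if h : i = 0 then eqToHom (by subst h; simp [trivX]) else
    if h' : i = n then eqToHom (by
      subst h'; simp only [trivX]
      rw [if_neg (by omega), if_pos (by omega), if_neg (by omega), if_pos (by omega)]) else
    0

/-- The Yoneda class of the extension `E` is zero, i.e. `E` is Yoneda equivalent
to the trivial extension. -/
def PreExt.classZero (hn : 2 ≤ n) (E : PreExt C n) : Prop :=
  PreExt.YEquiv E (trivPreExt n hn (E.X (n + 1)) (E.X 0))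

end Triv


section OortAux

variable {C : Type u} [Category.{v} C] [Abelian C]

lemma sandwichExact {X₁ X₂ X₃ Y₁ Y₂ Y₃ : C} (f : X₁ ⟶ X₂) (g : X₂ ⟶ X₃)
    (w : f ≫ g = 0) (hex : (ShortComplex.mk f g w).Exact)
    (e₁ : Y₁ = X₁) (e₂ : X₂ = Y₂) (e₂' : Y₂ = X₂) (e₃ : X₃ = Y₃)
    (w' : (eqToHom e₁ ≫ f ≫ eqToHom e₂) ≫ (eqToHom e₂' ≫ g ≫ eqToHom e₃) = 0) :
    (ShortComplex.mk (eqToHom e₁ ≫ f ≫ eqToHom e₂) (eqToHom e₂' ≫ g ≫ eqToHom e₃) w').Exact := by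
  exact (ShortComplex.exact_iff_of_epi_of_isIso_of_mono
    (S₁ := ShortComplex.mk (eqToHom e₁ ≫ f ≫ eqToHom e₂) (eqToHom e₂' ≫ g ≫ eqToHom e₃) w')
    (S₂ := ShortComplex.mk f g w)
    ⟨eqToHom e₁, eqToHom e₂', eqToHom e₃.symm, by simp, by simp⟩).2 hex

lemma sandwichExact' {X₁ X₂ X₃ Y₁ Y₂ Y₃ : C} (f : X₁ ⟶ X₂) (g : X₂ ⟶ X₃)
    (w : f ≫ g = 0) (hex : (ShortComplex.mk f g w).Exact)
    (e₁ : Y₁ = X₁) (e₂ : X₂ = Y₂) (e₂' : Y₂ = X₂) (e₃ : X₃ = Y₃) :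
    ∃ w', (ShortComplex.mk (eqToHom e₁ ≫ f ≫ eqToHom e₂) (eqToHom e₂' ≫ g ≫ eqToHom e₃) w').Exact :=
  ⟨by simp [reassoc_of% w], sandwichExact f g w hex e₁ e₂ e₂' e₃ _⟩

lemma exact_iff_sameKernel {X Y Z Z' : C} (f : X ⟶ Y) (g : Y ⟶ Z) (g' : Y ⟶ Z')
    (w : f ≫ g = 0) (w' : f ≫ g' = 0)
    (H : ∀ (W : C) (h : W ⟶ Y), h ≫ g = 0 ↔ h ≫ g' = 0) :
    (ShortComplex.mk f g w).Exact ↔ (ShortComplex.mk f g' w').Exact := by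
  rw [ShortComplex.exact_iff_epi_kernel_lift, ShortComplex.exact_iff_epi_kernel_lift]
  have h1 : kernel.ι g ≫ g' = 0 := (H _ _).1 (kernel.condition g)
  have h2 : kernel.ι g' ≫ g = 0 := (H _ _).2 (kernel.condition g')
  have uv : kernel.lift g' (kernel.ι g) h1 ≫ kernel.lift g (kernel.ι g') h2 = 𝟙 _ := by
    rw [← cancel_mono (kernel.ι g)]; simp
  have vu : kernel.lift g (kernel.ι g') h2 ≫ kernel.lift g' (kernel.ι g) h1 = 𝟙 _ := by
    rw [← cancel_mono (kernel.ι g')]; simp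
  have key : kernel.lift g f w ≫ kernel.lift g' (kernel.ι g) h1 = kernel.lift g' f w' := by
    rw [← cancel_mono (kernel.ι g')]; simp
  haveI : IsIso (kernel.lift g' (kernel.ι g) h1) := ⟨kernel.lift g (kernel.ι g') h2, uv, vu⟩
  constructor
  · intro h
    show Epi (kernel.lift g' f w')
    rw [← key]
    haveI : Epi (kernel.lift g f w) := h
    exact epi_comp _ _
  · intro h
    show Epi (kernel.lift g f w)
    have key2 : kernel.lift g f w = kernel.lift g' f w' ≫ kernel.lift g (kernel.ι g') h2 := by
      rw [← key, assoc, uv, comp_id]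
    rw [key2]
    haveI : Epi (kernel.lift g' f w') := h
    haveI : IsIso (kernel.lift g (kernel.ι g') h2) := ⟨kernel.lift g' (kernel.ι g) h1, vu, uv⟩
    exact epi_comp _ _

lemma exact_pullback_lift_snd {X Y Z W : C} (g : Y ⟶ Z) (t : W ⟶ Z) (f : X ⟶ Y)
    (w : f ≫ g = 0) (hex : (ShortComplex.mk f g w).Exact) :
    (ShortComplex.mk (pullback.lift f 0 (by rw [w, zero_comp]) : X ⟶ pullback g t)
      (pullback.snd g t) (pullback.lift_snd _ _ _)).Exact := by
  rw [ShortComplex.exact_iff_epi_kernel_lift] at hex ⊢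
  have hfg : (kernel.ι (pullback.snd g t) ≫ pullback.fst g t) ≫ g = 0 := by
    rw [assoc, pullback.condition, ← assoc, kernel.condition, zero_comp]
  have hv0 : (pullback.lift (kernel.ι g) 0 (by rw [kernel.condition, zero_comp]) :
      kernel g ⟶ pullback g t) ≫ pullback.snd g t = 0 := pullback.lift_snd _ _ _
  set u : kernel (pullback.snd g t) ⟶ kernel g := kernel.lift g _ hfg with hu
  set v : kernel g ⟶ kernel (pullback.snd g t) := kernel.lift _ _ hv0 with hv
  have huv : u ≫ v = 𝟙 _ := by
    rw [← cancel_mono (kernel.ι (pullback.snd g t))]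
    apply pullback.hom_ext <;> simp [hu, hv, pullback.lift_fst, pullback.lift_snd, pullback.lift_fst_assoc, pullback.lift_snd_assoc]
  have hvu : v ≫ u = 𝟙 _ := by
    rw [← cancel_mono (kernel.ι g)]; simp [hu, hv, pullback.lift_fst, pullback.lift_snd, pullback.lift_fst_assoc, pullback.lift_snd_assoc]
  haveI : IsIso v := ⟨u, hvu, huv⟩
  show Epi (kernel.lift (pullback.snd g t) (pullback.lift f 0 (by rw [w, zero_comp])) (pullback.lift_snd _ _ _))
  have key : kernel.lift (pullback.snd g t) (pullback.lift f 0 (by rw [w, zero_comp]))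
      (pullback.lift_snd _ _ _) = kernel.lift g f w ≫ v := by
    rw [← cancel_mono (kernel.ι (pullback.snd g t))]
    apply pullback.hom_ext <;> simp [hv, pullback.lift_fst, pullback.lift_snd, pullback.lift_fst_assoc, pullback.lift_snd_assoc]
  rw [key]
  haveI : Epi (kernel.lift g f w) := hex
  exact epi_comp _ _

end OortAux

section OortAux2

variable {C : Type u} [Category.{v} C] [Abelian C] (m : ℕ)

noncomputable def auxFX (G : PreExt C (m + 2)) (P Q : C) : ℕ → C :=
  fun i => if i ≤ m then G.X i else if i = m + 1 then P else Q

lemma auxFX_low (G : PreExt C (m + 2)) (P Q : C) {i : ℕ} (h : i ≤ m) :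
    auxFX m G P Q i = G.X i := if_pos h

lemma auxFX_mid (G : PreExt C (m + 2)) (P Q : C) : auxFX m G P Q (m + 1) = P := by
  simp only [auxFX]; rw [if_neg (by omega)]; simp

lemma auxFX_high (G : PreExt C (m + 2)) (P Q : C) {i : ℕ} (h : m + 2 ≤ i) :
    auxFX m G P Q i = Q := by
  simp only [auxFX]; rw [if_neg (by omega), if_neg (by omega)]

noncomputable def auxFd (G : PreExt C (m + 2)) {K Q : C} (g : G.X (m + 1) ⟶ K)
    (hg : G.d m ≫ g = 0) (t : Q ⟶ K) :
    ∀ i, auxFX m G (pullback g t) Q i ⟶ auxFX m G (pullback g t) Q (i + 1) := fun i =>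
  if h : i + 1 ≤ m then
    eqToHom (auxFX_low m G _ _ (by omega)) ≫ G.d i ≫ eqToHom (auxFX_low m G _ _ h).symm
  else if h2 : i = m then
    eqToHom (show auxFX m G (pullback g t) Q i = G.X m by
        rw [h2]; exact auxFX_low m G _ _ le_rfl) ≫
      pullback.lift (G.d m) 0 (by rw [hg, zero_comp]) ≫
      eqToHom (show pullback g t = auxFX m G (pullback g t) Q (i + 1) by
        rw [h2]; exact (auxFX_mid m G _ _).symm)
  else if h3 : i = m + 1 then
    eqToHom (show auxFX m G (pullback g t) Q i = pullback g t by
        rw [h3]; exact auxFX_mid m G _ _) ≫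
      pullback.snd g t ≫
      eqToHom (show Q = auxFX m G (pullback g t) Q (i + 1) by
        rw [h3]; exact (auxFX_high m G _ _ (by omega)).symm)
  else 0

lemma auxFd_low (G : PreExt C (m + 2)) {K Q : C} (g : G.X (m + 1) ⟶ K)
    (hg : G.d m ≫ g = 0) (t : Q ⟶ K) {i : ℕ} (h : i + 1 ≤ m) :
    auxFd m G g hg t i =
      eqToHom (auxFX_low m G _ _ (by omega)) ≫ G.d i ≫ eqToHom (auxFX_low m G _ _ h).symm := by
  simp only [auxFd]; rw [dif_pos h]

lemma auxFd_mid (G : PreExt C (m + 2)) {K Q : C} (g : G.X (m + 1) ⟶ K)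
    (hg : G.d m ≫ g = 0) (t : Q ⟶ K) :
    auxFd m G g hg t m =
      eqToHom (auxFX_low m G (pullback g t) Q le_rfl) ≫
        pullback.lift (G.d m) 0 (by rw [hg, zero_comp]) ≫
        eqToHom (auxFX_mid m G (pullback g t) Q).symm := by
  simp only [auxFd]; rw [dif_neg (by omega)]; simp

lemma auxFd_snd (G : PreExt C (m + 2)) {K Q : C} (g : G.X (m + 1) ⟶ K)
    (hg : G.d m ≫ g = 0) (t : Q ⟶ K) :
    auxFd m G g hg t (m + 1) =
      eqToHom (auxFX_mid m G (pullback g t) Q) ≫ pullback.snd g t ≫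
        eqToHom (auxFX_high m G (pullback g t) Q (le_refl (m + 2))).symm := by
  simp only [auxFd]; rw [dif_neg (by omega), dif_neg (by omega)]; simp

noncomputable def auxPhi (E G : PreExt C (m + 2)) {K : C} (g : G.X (m + 1) ⟶ K)
    (t : E.X (m + 2) ⟶ K) (α : ∀ i, E.X i ⟶ G.X i)
    (comm : α (m + 1) ≫ g = E.d (m + 1) ≫ t) :
    ∀ i, E.X i ⟶ auxFX m G (pullback g t) (E.X (m + 2)) i := fun i =>
  if h : i ≤ m then α i ≫ eqToHom (auxFX_low m G _ _ h).symm
  else if h2 : i = m + 1 then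
    eqToHom (show E.X i = E.X (m + 1) by rw [h2]) ≫
      pullback.lift (α (m + 1)) (E.d (m + 1)) comm ≫
      eqToHom (show pullback g t = auxFX m G (pullback g t) (E.X (m + 2)) i by
        rw [h2]; exact (auxFX_mid m G _ _).symm)
  else if h3 : i = m + 2 then
    eqToHom (show E.X i = auxFX m G (pullback g t) (E.X (m + 2)) i by
      rw [h3]; exact (auxFX_high m G _ _ le_rfl).symm)
  else 0

lemma auxPhi_low (E G : PreExt C (m + 2)) {K : C} (g : G.X (m + 1) ⟶ K)
    (t : E.X (m + 2) ⟶ K) (α : ∀ i, E.X i ⟶ G.X i)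
    (comm : α (m + 1) ≫ g = E.d (m + 1) ≫ t) {i : ℕ} (h : i ≤ m) :
    auxPhi m E G g t α comm i = α i ≫ eqToHom (auxFX_low m G _ _ h).symm := by
  simp only [auxPhi]; rw [dif_pos h]

lemma auxPhi_mid (E G : PreExt C (m + 2)) {K : C} (g : G.X (m + 1) ⟶ K)
    (t : E.X (m + 2) ⟶ K) (α : ∀ i, E.X i ⟶ G.X i)
    (comm : α (m + 1) ≫ g = E.d (m + 1) ≫ t) :
    auxPhi m E G g t α comm (m + 1) =
      pullback.lift (α (m + 1)) (E.d (m + 1)) comm ≫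
        eqToHom (auxFX_mid m G (pullback g t) (E.X (m + 2))).symm := by
  simp only [auxPhi]; rw [dif_neg (by omega)]; simp

lemma auxPhi_top (E G : PreExt C (m + 2)) {K : C} (g : G.X (m + 1) ⟶ K)
    (t : E.X (m + 2) ⟶ K) (α : ∀ i, E.X i ⟶ G.X i)
    (comm : α (m + 1) ≫ g = E.d (m + 1) ≫ t) :
    auxPhi m E G g t α comm (m + 2) =
      eqToHom (auxFX_high m G (pullback g t) (E.X (m + 2)) le_rfl).symm := by
  simp only [auxPhi]; rw [dif_neg (by omega), dif_neg (by omega)]; simp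

end OortAux2

/-- Given an `n`-extension `E` of `A` by `B` whose triviality is
exhibited by an Oort diagram — i.e. a morphism of extensions `α : E → G` inducing
the identity on the ends, together with a splitting `s` of `Gₙ → A` (which is the
component at `A` of a morphism from the trivial-type extension
`0 → B → B → 0 → ⋯ → 0 → A → A → 0` to `G`) — the pullback construction yields an
`(n-1)`-extension `F` of `Eₙ` by `B`, agreeing with `G` in degrees `1, …, n-2`,
together with a morphism of complexes `E → F` inducing the identity on `B` and `Eₙ`. -/
theorem statement10 {C : Type u} [Category.{v} C] [Abelian C]
    (n : ℕ) (hn : 2 ≤ n) (E : PreExt C n) (hE : E.IsExt)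
    (G : PreExt C n) (hG : G.IsExt)
    (h0 : E.X 0 = G.X 0) (h1 : E.X (n + 1) = G.X (n + 1))
    (α : ∀ i, E.X i ⟶ G.X i)
    (hα0 : α 0 = eqToHom h0) (hα1 : α (n + 1) = eqToHom h1)
    (hsq : ∀ i, i ≤ n → E.d i ≫ α (i + 1) = α i ≫ G.d i)
    (s : G.X (n + 1) ⟶ G.X n) (hs : s ≫ G.d n = 𝟙 (G.X (n + 1))) :
    ∃ F : PreExt C (n - 1), F.IsExt ∧
      (∀ i, 1 ≤ i → i ≤ n - 2 → F.X i = G.X i) ∧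
      ∃ (k0 : E.X 0 = F.X 0) (k1 : E.X n = F.X n)
        (φ : ∀ i, E.X i ⟶ F.X i),
        φ 0 = eqToHom k0 ∧ φ n = eqToHom k1 ∧
        ∀ i, i + 1 ≤ n → E.d i ≫ φ (i + 1) = φ i ≫ F.d i := by

  obtain ⟨m, rfl⟩ : ∃ m, n = m + 2 := ⟨n - 2, by omega⟩
  obtain ⟨hmE, hepiE, hexE⟩ := hE
  obtain ⟨hmG, hepiG, hexG⟩ := hG
  obtain ⟨wG2, hGex2⟩ := hexG (m + 1) le_rfl
  obtain ⟨wG1, hGex1⟩ := hexG m (by omega)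
  obtain ⟨wE2, -⟩ := hexE (m + 1) le_rfl
  obtain ⟨wE1, -⟩ := hexE m (by omega)
  set g : G.X (m + 1) ⟶ kernel (G.d (m + 2)) := kernel.lift _ (G.d (m + 1)) wG2 with hgdef
  have hg : G.d m ≫ g = 0 := by
    rw [← cancel_mono (kernel.ι (G.d (m + 2)))]
    simp [hgdef, wG1]
  have epig : Epi g := by
    rw [ShortComplex.exact_iff_epi_kernel_lift] at hGex2
    exact hGex2
  have ht0 : (α (m + 2) - E.d (m + 2) ≫ eqToHom h1 ≫ s) ≫ G.d (m + 2) = 0 := by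
    have h5 := hsq (m + 2) le_rfl
    rw [hα1] at h5
    simp [Preadditive.sub_comp, hs, ← h5]
  set t : E.X (m + 2) ⟶ kernel (G.d (m + 2)) := kernel.lift _ _ ht0 with htdef
  have comm : α (m + 1) ≫ g = E.d (m + 1) ≫ t := by
    rw [← cancel_mono (kernel.ι (G.d (m + 2)))]
    simp only [hgdef, htdef, assoc, kernel.lift_ι, Preadditive.comp_sub]
    rw [← hsq (m + 1) (by omega)]
    simp [reassoc_of% wE2]
  have H1 : ∀ (W : C) (h : W ⟶ G.X (m + 1)), h ≫ G.d (m + 1) = 0 ↔ h ≫ g = 0 := by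
    intro W h
    constructor
    · intro hh
      rw [hgdef, ← cancel_mono (kernel.ι (G.d (m + 2)))]
      simp [hh]
    · intro hh
      have := congrArg (fun z => z ≫ kernel.ι (G.d (m + 2))) hh
      simpa [hgdef] using this
  refine ⟨⟨auxFX m G (pullback g t) (E.X (m + 2)), auxFd m G g hg t⟩, ⟨?_, ?_, ?_⟩, ?_,
    h0.trans (auxFX_low m G (pullback g t) (E.X (m + 2)) (Nat.zero_le m)).symm,
    (auxFX_high m G (pullback g t) (E.X (m + 2)) le_rfl).symm,
    auxPhi m E G g t α comm, ?_, ?_, ?_⟩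
  · -- Mono (F.d 0)
    show Mono (auxFd m G g hg t 0)
    rcases Nat.eq_zero_or_pos m with hm0 | hm0
    · subst hm0
      rw [auxFd_mid]
      have hw0 : G.d 0 ≫ g = 0 ≫ t := by simp [hg]
      haveI : Mono ((pullback.lift (G.d 0) 0 hw0 :
          G.X 0 ⟶ pullback g t) ≫ pullback.fst g t) := by
        rw [pullback.lift_fst]
        exact hmG
      haveI : Mono (pullback.lift (G.d 0) 0 hw0 :
          G.X 0 ⟶ pullback g t) := mono_of_mono _ (pullback.fst g t)
      infer_instance
    · rw [auxFd_low m G g hg t (by omega)]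
      haveI := hmG
      infer_instance
  · -- Epi (F.d (n-1))
    show Epi (auxFd m G g hg t (m + 1))
    rw [auxFd_snd]
    haveI := epig
    infer_instance
  · -- exactness
    intro i hi
    show ∃ w, (ShortComplex.mk (auxFd m G g hg t i) (auxFd m G g hg t (i + 1)) w).Exact
    by_cases hA : i + 1 + 1 ≤ m
    · rw [auxFd_low m G g hg t (by omega), auxFd_low m G g hg t hA]
      obtain ⟨w, hw⟩ := hexG i (by omega)
      exact sandwichExact' _ _ w hw _ _ _ _
    · by_cases hB : i + 1 = m
      · subst hB
        rw [auxFd_low (i + 1) G g hg t le_rfl, auxFd_mid]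
        obtain ⟨w, hw⟩ := hexG i (by omega)
        have H2 : ∀ (W : C) (h : W ⟶ G.X (i + 1)), h ≫ G.d (i + 1) = 0 ↔
            h ≫ (pullback.lift (G.d (i + 1)) 0 (by rw [hg, zero_comp]) :
              G.X (i + 1) ⟶ pullback g t) = 0 := by
          intro W h
          constructor
          · intro hh
            apply pullback.hom_ext
            · simpa [pullback.lift_fst, pullback.lift_snd, pullback.lift_fst_assoc, pullback.lift_snd_assoc] using hh
            · simp [pullback.lift_fst, pullback.lift_snd, pullback.lift_fst_assoc, pullback.lift_snd_assoc]
          · intro hh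
            have := congrArg (fun z => z ≫ pullback.fst g t) hh
            simpa [pullback.lift_fst, pullback.lift_snd, pullback.lift_fst_assoc, pullback.lift_snd_assoc] using this
        have w' := (H2 _ _).1 w
        exact sandwichExact' _ _ w' ((exact_iff_sameKernel _ _ _ w w' H2).1 hw) _ _ _ _
      · have hiem : i = m := by omega
        subst hiem
        rw [auxFd_mid, auxFd_snd]
        have hg' := (exact_iff_sameKernel (G.d i) (G.d (i + 1)) g wG1 hg (H1)).1 hGex1
        have hp := exact_pullback_lift_snd g t (G.d i) hg hg'
        exact sandwichExact' _ _ _ hp _ _ _ _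
  · -- middle objects agree with G
    intro i hi1 hi2
    show auxFX m G (pullback g t) (E.X (m + 2)) i = G.X i
    exact auxFX_low m G _ _ (by omega)
  · -- φ 0
    rw [auxPhi_low m E G g t α comm (Nat.zero_le m), hα0]
    simp
  · -- φ n
    show auxPhi m E G g t α comm (m + 2) = _
    rw [auxPhi_top]
  · -- squares
    intro i hi
    show E.d i ≫ auxPhi m E G g t α comm (i + 1) =
      auxPhi m E G g t α comm i ≫ auxFd m G g hg t i
    by_cases hA : i + 1 ≤ m
    · rw [auxPhi_low m E G g t α comm (i := i + 1) hA,
        auxPhi_low m E G g t α comm (i := i) (by omega), auxFd_low m G g hg t hA]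
      rw [← assoc, hsq i (by omega)]
      simp
    · by_cases hB : i = m
      · subst hB
        rw [auxPhi_low i E G g t α comm le_rfl, auxPhi_mid, auxFd_mid]
        simp only [assoc, eqToHom_trans_assoc, eqToHom_refl, id_comp]
        rw [← assoc, ← assoc, cancel_mono]
        apply pullback.hom_ext
        · simp [hsq i (by omega), pullback.lift_fst, pullback.lift_snd, pullback.lift_fst_assoc, pullback.lift_snd_assoc]
        · simp [wE1, pullback.lift_fst, pullback.lift_snd, pullback.lift_fst_assoc, pullback.lift_snd_assoc]
      · have hiem : i = m + 1 := by omega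
        subst hiem
        rw [auxPhi_mid, auxPhi_top, auxFd_snd]
        simp [pullback.lift_fst, pullback.lift_snd, pullback.lift_fst_assoc, pullback.lift_snd_assoc]
end
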